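/- arXiv:2212.14123 — 5 statements merged into one kernel-verified Lean document; each statement's English description precedes it below -/
import Mathlib

section
/- Let n ∈ ℤ_{>0} and let 𝒳, 𝒴 be measure networks on n-point sets with uniform probability measures such that the network functions ω_X and ω_Y, viewed as n × n real matrices, are symmetric positive definite. Then GW_2(𝒳,𝒴) is realized by a measure-preserving map: there exists a bijection φ : X → Y such that dis_2(π_φ) = GW_2(𝒳,𝒴). In particular, GW_2(𝒳,𝒴) = GM_2(𝒳,𝒴). -/
open MeasureTheory ENNReal

/-- The uniform probability measure on a finite type. -/
noncomputable def unifFin (X : Type) [Fintype X] [MeasurableSpace X] : Measure X :=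
  (Fintype.card X : ℝ≥0∞)⁻¹ • Measure.count

/-- The 2-distortion of a coupling `π` between finite measure networks. -/
noncomputable def dis2Fin {X Y : Type} [MeasurableSpace X] [MeasurableSpace Y]
    (ωX : X → X → ℝ) (ωY : Y → Y → ℝ) (π : Measure (X × Y)) : ℝ≥0∞ :=
  (∫⁻ q : (X × Y) × (X × Y),
    ENNReal.ofReal |ωX q.1.1 q.2.1 - ωY q.1.2 q.2.2| ^ (2 : ℝ) ∂(π.prod π)) ^ ((1 : ℝ) / 2)

/-- The Gromov–Wasserstein 2-distance between finite measure networks. -/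
noncomputable def gw2Fin {X Y : Type} [MeasurableSpace X] [MeasurableSpace Y]
    (ωX : X → X → ℝ) (ωY : Y → Y → ℝ) (μX : Measure X) (μY : Measure Y) : ℝ≥0∞ :=
  ⨅ (π : Measure (X × Y)) (_ : IsProbabilityMeasure π)
    (_ : π.map Prod.fst = μX ∧ π.map Prod.snd = μY), dis2Fin ωX ωY π

/-- The Gromov–Monge 2-distance between finite measure networks. -/
noncomputable def gm2Fin {X Y : Type} [MeasurableSpace X] [MeasurableSpace Y]
    (ωX : X → X → ℝ) (ωY : Y → Y → ℝ) (μX : Measure X) (μY : Measure Y) : ℝ≥0∞ :=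
  ⨅ (φ : X → Y) (_ : Measurable φ) (_ : μX.map φ = μY),
    dis2Fin ωX ωY (μX.map fun x => (x, φ x))

namespace GWAux

open Finset

variable {X Y : Type} [Fintype X] [Fintype Y]

/-- The quadratic distortion functional on densities. -/
noncomputable def fsQ (ωX : X → X → ℝ) (ωY : Y → Y → ℝ) (u : X × Y → ℝ) : ℝ :=
  ∑ p : X × Y, ∑ q : X × Y, (ωX p.1 q.1 - ωY p.2 q.2) ^ 2 * (u p * u q)

/-- The mixed quadratic form. -/
noncomputable def qbQ (ωX : X → X → ℝ) (ωY : Y → Y → ℝ) (u v : X × Y → ℝ) : ℝ :=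
  ∑ p : X × Y, ∑ q : X × Y, (ωX p.1 q.1 * ωY p.2 q.2) * (u p * v q)

lemma qbQ_self_nonneg (ωX : X → X → ℝ) (ωY : Y → Y → ℝ)
    (hA : (Matrix.of ωX).PosSemidef) (hB : (Matrix.of ωY).PosSemidef)
    (u : X × Y → ℝ) : 0 ≤ qbQ ωX ωY u u := by
  classical
  obtain ⟨R, hR⟩ : ∃ R : Matrix X X ℝ, Matrix.of ωX = R.conjTranspose * R := by
    open scoped MatrixOrder in exact CStarAlgebra.nonneg_iff_eq_star_mul_self.mp hA.nonneg
  obtain ⟨S, hS⟩ : ∃ S : Matrix Y Y ℝ, Matrix.of ωY = S.conjTranspose * S := by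
    open scoped MatrixOrder in exact CStarAlgebra.nonneg_iff_eq_star_mul_self.mp hB.nonneg
  have hAe : ∀ x x', ωX x x' = ∑ k, R k x * R k x' := by
    intro x x'
    have := congrFun (congrFun hR x) x'
    simpa [Matrix.mul_apply, Matrix.conjTranspose_apply] using this
  have hBe : ∀ y y', ωY y y' = ∑ l, S l y * S l y' := by
    intro y y'
    have := congrFun (congrFun hS y) y'
    simpa [Matrix.mul_apply, Matrix.conjTranspose_apply] using this
  have key : qbQ ωX ωY u u
      = ∑ m : X × Y, (∑ p : X × Y, (R m.1 p.1 * S m.2 p.2) * u p) ^ 2 := by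
    have h1 : qbQ ωX ωY u u = ∑ p : X × Y, ∑ q : X × Y, ∑ m : X × Y,
        ((R m.1 p.1 * S m.2 p.2) * u p) * ((R m.1 q.1 * S m.2 q.2) * u q) := by
      refine Finset.sum_congr rfl fun p _ => Finset.sum_congr rfl fun q _ => ?_
      rw [hAe p.1 q.1, hBe p.2 q.2, Fintype.sum_mul_sum, Fintype.sum_prod_type,
        Finset.sum_mul]
      refine Finset.sum_congr rfl fun k _ => ?_
      rw [Finset.sum_mul]
      exact Finset.sum_congr rfl fun l _ => by ring
    rw [h1]
    have h2 : (∑ p : X × Y, ∑ q : X × Y, ∑ m : X × Y,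
        ((R m.1 p.1 * S m.2 p.2) * u p) * ((R m.1 q.1 * S m.2 q.2) * u q))
        = ∑ m : X × Y, ∑ p : X × Y, ∑ q : X × Y,
        ((R m.1 p.1 * S m.2 p.2) * u p) * ((R m.1 q.1 * S m.2 q.2) * u q) :=
      calc (∑ p : X × Y, ∑ q : X × Y, ∑ m : X × Y,
            ((R m.1 p.1 * S m.2 p.2) * u p) * ((R m.1 q.1 * S m.2 q.2) * u q))
          = ∑ p : X × Y, ∑ m : X × Y, ∑ q : X × Y,
            ((R m.1 p.1 * S m.2 p.2) * u p) * ((R m.1 q.1 * S m.2 q.2) * u q) :=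
            Finset.sum_congr rfl fun p _ => Finset.sum_comm
        _ = ∑ m : X × Y, ∑ p : X × Y, ∑ q : X × Y,
            ((R m.1 p.1 * S m.2 p.2) * u p) * ((R m.1 q.1 * S m.2 q.2) * u q) :=
            Finset.sum_comm
    rw [h2]
    refine Finset.sum_congr rfl fun m _ => ?_
    rw [sq, Fintype.sum_mul_sum]
  rw [key]
  exact Finset.sum_nonneg fun m _ => sq_nonneg _

lemma qbQ_comm (ωX : X → X → ℝ) (ωY : Y → Y → ℝ)
    (hA : ∀ x x', ωX x x' = ωX x' x) (hB : ∀ y y', ωY y y' = ωY y' y)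
    (u v : X × Y → ℝ) : qbQ ωX ωY u v = qbQ ωX ωY v u := by
  unfold qbQ
  rw [Finset.sum_comm]
  refine Finset.sum_congr rfl fun p _ => Finset.sum_congr rfl fun q _ => ?_
  rw [hA q.1 p.1, hB q.2 p.2]
  ring

lemma qbQ_sub_self (ωX : X → X → ℝ) (ωY : Y → Y → ℝ)
    (a b : X × Y → ℝ) :
    qbQ ωX ωY (fun p => a p - b p) (fun p => a p - b p)
      = qbQ ωX ωY a a - qbQ ωX ωY a b - qbQ ωX ωY b a + qbQ ωX ωY b b := by
  unfold qbQ
  simp only [← Finset.sum_add_distrib, ← Finset.sum_sub_distrib]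
  exact Finset.sum_congr rfl fun p _ => Finset.sum_congr rfl fun q _ => by ring

lemma two_qbQ_le (ωX : X → X → ℝ) (ωY : Y → Y → ℝ)
    (hA : (Matrix.of ωX).PosSemidef) (hB : (Matrix.of ωY).PosSemidef)
    (hA' : ∀ x x', ωX x x' = ωX x' x) (hB' : ∀ y y', ωY y y' = ωY y' y)
    (a b : X × Y → ℝ) :
    2 * qbQ ωX ωY a b ≤ qbQ ωX ωY a a + qbQ ωX ωY b b := by
  have h0 := qbQ_self_nonneg ωX ωY hA hB (fun p => a p - b p)
  rw [qbQ_sub_self] at h0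
  rw [qbQ_comm ωX ωY hA' hB' b a] at h0
  linarith

/-- A convex combination inside the quadratic form. -/
lemma qbQ_combo (ωX : X → X → ℝ) (ωY : Y → Y → ℝ) {ι : Type*} (s : Finset ι)
    (w : ι → ℝ) (vv : ι → X × Y → ℝ) :
    qbQ ωX ωY (fun p => ∑ σ ∈ s, w σ * vv σ p) (fun p => ∑ σ ∈ s, w σ * vv σ p)
      = ∑ σ ∈ s, ∑ τ ∈ s, (w σ * w τ) * qbQ ωX ωY (vv σ) (vv τ) := by
  unfold qbQ
  have h1 : ∀ p q : X × Y,
      (ωX p.1 q.1 * ωY p.2 q.2) * ((∑ σ ∈ s, w σ * vv σ p) * (∑ τ ∈ s, w τ * vv τ q))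
        = ∑ σ ∈ s, ∑ τ ∈ s, (w σ * w τ) * ((ωX p.1 q.1 * ωY p.2 q.2) * (vv σ p * vv τ q)) := by
    intro p q
    rw [Finset.sum_mul_sum s s (fun σ => w σ * vv σ p) (fun τ => w τ * vv τ q), Finset.mul_sum]
    refine Finset.sum_congr rfl fun σ _ => ?_
    rw [Finset.mul_sum]
    exact Finset.sum_congr rfl fun τ _ => by ring
  simp only [h1]
  calc (∑ p : X × Y, ∑ q : X × Y, ∑ σ ∈ s, ∑ τ ∈ s,
        (w σ * w τ) * ((ωX p.1 q.1 * ωY p.2 q.2) * (vv σ p * vv τ q)))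
      = ∑ p : X × Y, ∑ σ ∈ s, ∑ q : X × Y, ∑ τ ∈ s,
        (w σ * w τ) * ((ωX p.1 q.1 * ωY p.2 q.2) * (vv σ p * vv τ q)) :=
        Finset.sum_congr rfl fun p _ => Finset.sum_comm
    _ = ∑ σ ∈ s, ∑ p : X × Y, ∑ q : X × Y, ∑ τ ∈ s,
        (w σ * w τ) * ((ωX p.1 q.1 * ωY p.2 q.2) * (vv σ p * vv τ q)) := Finset.sum_comm
    _ = ∑ σ ∈ s, ∑ p : X × Y, ∑ τ ∈ s, ∑ q : X × Y,
        (w σ * w τ) * ((ωX p.1 q.1 * ωY p.2 q.2) * (vv σ p * vv τ q)) :=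
        Finset.sum_congr rfl fun σ _ => Finset.sum_congr rfl fun p _ => Finset.sum_comm
    _ = ∑ σ ∈ s, ∑ τ ∈ s, ∑ p : X × Y, ∑ q : X × Y,
        (w σ * w τ) * ((ωX p.1 q.1 * ωY p.2 q.2) * (vv σ p * vv τ q)) :=
        Finset.sum_congr rfl fun σ _ => Finset.sum_comm
    _ = ∑ σ ∈ s, ∑ τ ∈ s, (w σ * w τ) *
        (∑ p : X × Y, ∑ q : X × Y, (ωX p.1 q.1 * ωY p.2 q.2) * (vv σ p * vv τ q)) := by
        refine Finset.sum_congr rfl fun σ _ => Finset.sum_congr rfl fun τ _ => ?_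
        rw [Finset.mul_sum]
        exact Finset.sum_congr rfl fun p _ => by rw [Finset.mul_sum]

/-- Decomposition of the distortion on the coupling polytope. -/
lemma fsQ_eq_of_marginals (ωX : X → X → ℝ) (ωY : Y → Y → ℝ) (r : ℝ) (u : X × Y → ℝ)
    (hrow : ∀ x, ∑ y, u (x, y) = r) (hcol : ∀ y, ∑ x, u (x, y) = r) :
    fsQ ωX ωY u
      = ((∑ x, ∑ x', ωX x x' ^ 2) + (∑ y, ∑ y', ωY y y' ^ 2)) * r ^ 2
        - 2 * qbQ ωX ωY u u := by
  classical
  have split : fsQ ωX ωY u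
      = (∑ p : X × Y, ∑ q : X × Y, ωX p.1 q.1 ^ 2 * (u p * u q))
        + (∑ p : X × Y, ∑ q : X × Y, ωY p.2 q.2 ^ 2 * (u p * u q))
        - 2 * qbQ ωX ωY u u := by
    unfold fsQ qbQ
    rw [Finset.mul_sum, ← Finset.sum_add_distrib, ← Finset.sum_sub_distrib]
    refine Finset.sum_congr rfl fun p _ => ?_
    rw [Finset.mul_sum, ← Finset.sum_add_distrib, ← Finset.sum_sub_distrib]
    exact Finset.sum_congr rfl fun q _ => by ring
  have hS1 : (∑ p : X × Y, ∑ q : X × Y, ωX p.1 q.1 ^ 2 * (u p * u q))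
      = (∑ x, ∑ x', ωX x x' ^ 2) * r ^ 2 := by
    have e1 : ∀ p : X × Y, (∑ q : X × Y, ωX p.1 q.1 ^ 2 * (u p * u q))
        = ∑ x', ωX p.1 x' ^ 2 * (u p * r) := by
      intro p
      rw [Fintype.sum_prod_type]
      refine Finset.sum_congr rfl fun x' _ => ?_
      rw [← hrow x', Finset.mul_sum, Finset.mul_sum]
    simp only [e1]
    rw [Fintype.sum_prod_type]
    have e2 : ∀ x : X, (∑ y : Y, ∑ x', ωX x x' ^ 2 * (u (x, y) * r))
        = ∑ x', ωX x x' ^ 2 * (r * r) := by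
      intro x
      rw [Finset.sum_comm]
      refine Finset.sum_congr rfl fun x' _ => ?_
      rw [← hrow x, Finset.sum_mul, Finset.mul_sum]
    simp only [e2]
    rw [Finset.sum_mul]
    refine Finset.sum_congr rfl fun x _ => ?_
    rw [Finset.sum_mul]
    exact Finset.sum_congr rfl fun x' _ => by ring
  have hS2 : (∑ p : X × Y, ∑ q : X × Y, ωY p.2 q.2 ^ 2 * (u p * u q))
      = (∑ y, ∑ y', ωY y y' ^ 2) * r ^ 2 := by
    have e1 : ∀ p : X × Y, (∑ q : X × Y, ωY p.2 q.2 ^ 2 * (u p * u q))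
        = ∑ y', ωY p.2 y' ^ 2 * (u p * r) := by
      intro p
      rw [Fintype.sum_prod_type, Finset.sum_comm]
      refine Finset.sum_congr rfl fun y' _ => ?_
      rw [← hcol y', Finset.mul_sum, Finset.mul_sum]
    simp only [e1]
    rw [Fintype.sum_prod_type, Finset.sum_comm]
    have e2 : ∀ y : Y, (∑ x : X, ∑ y', ωY y y' ^ 2 * (u (x, y) * r))
        = ∑ y', ωY y y' ^ 2 * (r * r) := by
      intro y
      rw [Finset.sum_comm]
      refine Finset.sum_congr rfl fun y' _ => ?_
      rw [← hcol y, Finset.sum_mul, Finset.mul_sum]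
    simp only [e2]
    rw [Finset.sum_mul]
    refine Finset.sum_congr rfl fun y _ => ?_
    rw [Finset.sum_mul]
    exact Finset.sum_congr rfl fun y' _ => by ring
  rw [split, hS1, hS2]
  ring

/-- The density of the coupling induced by the bijection `f.symm ∘ σ ∘ e`. -/
noncomputable def permV [DecidableEq Y] {n : ℕ} (r : ℝ) (e : X ≃ Fin n) (f : Y ≃ Fin n)
    (σ : Equiv.Perm (Fin n)) : X × Y → ℝ :=
  fun p => if p.2 = f.symm (σ (e p.1)) then r else 0

lemma permV_row [DecidableEq Y] {n : ℕ} (r : ℝ) (e : X ≃ Fin n) (f : Y ≃ Fin n)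
    (σ : Equiv.Perm (Fin n)) (x : X) : ∑ y, permV r e f σ (x, y) = r := by
  classical
  simp [permV, Finset.sum_ite_eq']

lemma permV_col [DecidableEq Y] {n : ℕ} (r : ℝ) (e : X ≃ Fin n) (f : Y ≃ Fin n)
    (σ : Equiv.Perm (Fin n)) (y : Y) : ∑ x, permV r e f σ (x, y) = r := by
  classical
  have key : ∀ x : X, ((y = f.symm (σ (e x))) ↔ (x = e.symm (σ.symm (f y)))) := by
    intro x
    constructor
    · rintro rfl; simp
    · rintro rfl; simp
  simp only [permV, key]
  simp [Finset.sum_ite_eq']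

lemma exists_perm_le [DecidableEq Y] {n : ℕ} (hn : 0 < n) (e : X ≃ Fin n) (f : Y ≃ Fin n)
    (ωX : X → X → ℝ) (ωY : Y → Y → ℝ)
    (hA : (Matrix.of ωX).PosSemidef) (hB : (Matrix.of ωY).PosSemidef)
    (hA' : ∀ x x', ωX x x' = ωX x' x) (hB' : ∀ y y', ωY y y' = ωY y' y)
    (u : X × Y → ℝ) (hu0 : ∀ p, 0 ≤ u p)
    (hrow : ∀ x, ∑ y, u (x, y) = (n : ℝ)⁻¹) (hcol : ∀ y, ∑ x, u (x, y) = (n : ℝ)⁻¹) :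
    ∃ σ : Equiv.Perm (Fin n),
      fsQ ωX ωY (permV (n : ℝ)⁻¹ e f σ) ≤ fsQ ωX ωY u := by
  classical
  set r : ℝ := (n : ℝ)⁻¹ with hr
  have hn' : (n : ℝ) ≠ 0 := Nat.cast_ne_zero.mpr hn.ne'
  set D : Matrix (Fin n) (Fin n) ℝ :=
    Matrix.of (fun i j => (n : ℝ) * u (e.symm i, f.symm j)) with hDdef
  have hDmem : D ∈ doublyStochastic ℝ (Fin n) := by
    rw [mem_doublyStochastic_iff_sum]
    refine ⟨fun i j => mul_nonneg (by positivity) (hu0 _), fun i => ?_, fun j => ?_⟩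
    · have h1 : ∑ j, D i j = (n : ℝ) * ∑ j, u (e.symm i, f.symm j) := by
        rw [Finset.mul_sum]; rfl
      have h2 : ∑ j, u (e.symm i, f.symm j) = ∑ y, u (e.symm i, y) :=
        Equiv.sum_comp f.symm (fun y => u (e.symm i, y))
      rw [h1, h2, hrow, hr]
      field_simp
    · have h1 : ∑ i, D i j = (n : ℝ) * ∑ i, u (e.symm i, f.symm j) := by
        rw [Finset.mul_sum]; rfl
      have h2 : ∑ i, u (e.symm i, f.symm j) = ∑ x, u (x, f.symm j) :=
        Equiv.sum_comp e.symm (fun x => u (x, f.symm j))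
      rw [h1, h2, hcol, hr]
      field_simp
  obtain ⟨w, hw0, hw1, hwD⟩ := exists_eq_sum_perm_of_mem_doublyStochastic hDmem
  have hperm_apply : ∀ (σ : Equiv.Perm (Fin n)) (i j : Fin n),
      (σ.permMatrix ℝ) i j = if σ i = j then 1 else 0 := by
    intro σ i j
    rw [Equiv.Perm.permMatrix, PEquiv.toMatrix_toPEquiv_apply, Pi.single_apply]
    exact if_congr eq_comm rfl rfl
  have hu_eq : u = fun p => ∑ σ : Equiv.Perm (Fin n), w σ * permV r e f σ p := by
    funext p
    have hDval : D (e p.1) (f p.2) = (n : ℝ) * u p := by simp [hDdef]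
    have hup : u p = r * D (e p.1) (f p.2) := by
      rw [hDval, hr]; field_simp
    rw [hup, ← hwD]
    simp only [Matrix.sum_apply, Matrix.smul_apply, smul_eq_mul]
    rw [Finset.mul_sum]
    refine Finset.sum_congr rfl fun σ _ => ?_
    rw [hperm_apply]
    unfold permV
    by_cases h : σ (e p.1) = f p.2
    · rw [if_pos h, if_pos (by rw [h]; simp)]
      ring
    · rw [if_neg h, if_neg (fun hc => h (by rw [hc]; simp))]
      ring
  set C : ℝ := ((∑ x, ∑ x', ωX x x' ^ 2) + (∑ y, ∑ y', ωY y y' ^ 2)) * r ^ 2 with hC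
  have hFu : fsQ ωX ωY u = C - 2 * qbQ ωX ωY u u :=
    fsQ_eq_of_marginals ωX ωY r u hrow hcol
  have hFσ : ∀ σ : Equiv.Perm (Fin n), fsQ ωX ωY (permV r e f σ)
      = C - 2 * qbQ ωX ωY (permV r e f σ) (permV r e f σ) := fun σ =>
    fsQ_eq_of_marginals ωX ωY r _ (permV_row r e f σ) (permV_col r e f σ)
  have hQcombo : qbQ ωX ωY u u
      = ∑ σ, ∑ τ, (w σ * w τ) * qbQ ωX ωY (permV r e f σ) (permV r e f τ) := by
    conv_lhs => rw [hu_eq]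
    exact qbQ_combo ωX ωY Finset.univ w (fun σ => permV r e f σ)
  have hQle : qbQ ωX ωY u u
      ≤ ∑ σ : Equiv.Perm (Fin n), w σ * qbQ ωX ωY (permV r e f σ) (permV r e f σ) := by
    rw [hQcombo]
    have step1 : ∑ σ, ∑ τ, (w σ * w τ) * qbQ ωX ωY (permV r e f σ) (permV r e f τ)
        ≤ ∑ σ : Equiv.Perm (Fin n), ∑ τ : Equiv.Perm (Fin n), (w σ * w τ) *
          ((qbQ ωX ωY (permV r e f σ) (permV r e f σ)
            + qbQ ωX ωY (permV r e f τ) (permV r e f τ)) / 2) := by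
      refine Finset.sum_le_sum fun σ _ => Finset.sum_le_sum fun τ _ => ?_
      refine mul_le_mul_of_nonneg_left ?_ (mul_nonneg (hw0 σ) (hw0 τ))
      have h2q := two_qbQ_le ωX ωY hA hB hA' hB' (permV r e f σ) (permV r e f τ)
      linarith
    refine step1.trans (le_of_eq ?_)
    have expand : ∀ σ τ : Equiv.Perm (Fin n),
        (w σ * w τ) * ((qbQ ωX ωY (permV r e f σ) (permV r e f σ)
            + qbQ ωX ωY (permV r e f τ) (permV r e f τ)) / 2)
          = (w σ * (qbQ ωX ωY (permV r e f σ) (permV r e f σ) / 2)) * w τ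
            + w σ * (w τ * (qbQ ωX ωY (permV r e f τ) (permV r e f τ) / 2)) := by
      intro σ τ; ring
    simp only [expand, Finset.sum_add_distrib]
    have t1 : (∑ σ : Equiv.Perm (Fin n), ∑ τ : Equiv.Perm (Fin n),
          (w σ * (qbQ ωX ωY (permV r e f σ) (permV r e f σ) / 2)) * w τ)
        = ∑ σ : Equiv.Perm (Fin n), w σ * (qbQ ωX ωY (permV r e f σ) (permV r e f σ) / 2) := by
      refine Finset.sum_congr rfl fun σ _ => ?_
      rw [← Finset.mul_sum, hw1, mul_one]
    have t2 : (∑ σ : Equiv.Perm (Fin n), ∑ τ : Equiv.Perm (Fin n),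
          w σ * (w τ * (qbQ ωX ωY (permV r e f τ) (permV r e f τ) / 2)))
        = ∑ τ : Equiv.Perm (Fin n), w τ * (qbQ ωX ωY (permV r e f τ) (permV r e f τ) / 2) := by
      have t2a : (∑ σ : Equiv.Perm (Fin n), ∑ τ : Equiv.Perm (Fin n),
            w σ * (w τ * (qbQ ωX ωY (permV r e f τ) (permV r e f τ) / 2)))
          = ∑ σ : Equiv.Perm (Fin n), w σ * (∑ τ : Equiv.Perm (Fin n),
            w τ * (qbQ ωX ωY (permV r e f τ) (permV r e f τ) / 2)) :=
        Finset.sum_congr rfl fun σ _ => by rw [Finset.mul_sum]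
      rw [t2a, ← Finset.sum_mul, hw1, one_mul]
    rw [t1, t2, ← Finset.sum_add_distrib]
    exact Finset.sum_congr rfl fun σ _ => by ring
  have hne : (Finset.univ : Finset (Equiv.Perm (Fin n))).Nonempty := Finset.univ_nonempty
  obtain ⟨σ₀, _, hσ₀⟩ := Finset.exists_min_image Finset.univ
    (fun σ => fsQ ωX ωY (permV r e f σ)) hne
  refine ⟨σ₀, ?_⟩
  have hsum : ∑ σ, w σ * fsQ ωX ωY (permV r e f σ)
      = C - 2 * ∑ σ : Equiv.Perm (Fin n), w σ * qbQ ωX ωY (permV r e f σ) (permV r e f σ) := by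
    have e1 : ∀ σ : Equiv.Perm (Fin n),
        w σ * fsQ ωX ωY (permV r e f σ)
          = w σ * C - 2 * (w σ * qbQ ωX ωY (permV r e f σ) (permV r e f σ)) := by
      intro σ; rw [hFσ σ]; ring
    simp only [e1, Finset.sum_sub_distrib, ← Finset.sum_mul, hw1, one_mul, ← Finset.mul_sum]
  have hmin : fsQ ωX ωY (permV r e f σ₀) ≤ ∑ σ, w σ * fsQ ωX ωY (permV r e f σ) := by
    have hge : ∑ σ, w σ * fsQ ωX ωY (permV r e f σ)
        ≥ ∑ σ, w σ * fsQ ωX ωY (permV r e f σ₀) :=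
      Finset.sum_le_sum fun σ _ =>
        mul_le_mul_of_nonneg_left (hσ₀ σ (Finset.mem_univ σ)) (hw0 σ)
    rw [← Finset.sum_mul, hw1, one_mul] at hge
    exact hge
  rw [hFu]
  refine hmin.trans ?_
  rw [hsum]
  linarith [hQle]

section MeasureAux

variable {α : Type} [Fintype α] [MeasurableSpace α] [MeasurableSingletonClass α]

lemma measure_finset_sum (μ : Measure α) (s : Finset α) :
    μ ↑s = ∑ x ∈ s, μ {x} := by
  have h : (↑s : Set α) = ⋃ x ∈ (s : Finset α), ({x} : Set α) := by
    ext a; simp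
  rw [h, measure_biUnion_finset ?_ fun b _ => measurableSet_singleton b]
  intro x _ y _ hxy
  simp only [Function.onFun]
  exact Set.disjoint_singleton.mpr hxy

lemma measure_ext_singleton {μ ν : Measure α} (h : ∀ x, μ {x} = ν {x}) : μ = ν := by
  ext s _
  rw [← Set.Finite.coe_toFinset (Set.toFinite s), measure_finset_sum, measure_finset_sum]
  exact Finset.sum_congr rfl fun x _ => h x

lemma unifFin_singleton (x : α) : unifFin α {x} = (Fintype.card α : ℝ≥0∞)⁻¹ := by
  simp [unifFin, Measure.count_singleton]

lemma unifFin_prob (h : Fintype.card α ≠ 0) : IsProbabilityMeasure (unifFin α) := by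
  constructor
  rw [unifFin, Measure.smul_apply, Measure.count_univ, smul_eq_mul, ENat.card_eq_coe_fintype_card,
    ENat.toENNReal_coe]
  exact ENNReal.inv_mul_cancel (Nat.cast_ne_zero.mpr h) (natCast_ne_top _)

end MeasureAux

section MeasureXY

variable [MeasurableSpace X] [MeasurableSingletonClass X]
  [MeasurableSpace Y] [MeasurableSingletonClass Y]

lemma dis2Fin_eq_fsQ (ωX : X → X → ℝ) (ωY : Y → Y → ℝ) (π : Measure (X × Y))
    [IsProbabilityMeasure π] :
    dis2Fin ωX ωY π
      = ENNReal.ofReal (fsQ ωX ωY (fun p => (π {p}).toReal)) ^ ((1 : ℝ) / 2) := by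
  unfold dis2Fin
  congr 1
  rw [lintegral_fintype, Fintype.sum_prod_type]
  unfold fsQ
  rw [ENNReal.ofReal_sum_of_nonneg (fun p _ => Finset.sum_nonneg fun q _ =>
    mul_nonneg (sq_nonneg _) (mul_nonneg ENNReal.toReal_nonneg ENNReal.toReal_nonneg))]
  refine Finset.sum_congr rfl fun z _ => ?_
  rw [ENNReal.ofReal_sum_of_nonneg (fun q _ =>
    mul_nonneg (sq_nonneg _) (mul_nonneg ENNReal.toReal_nonneg ENNReal.toReal_nonneg))]
  refine Finset.sum_congr rfl fun w _ => ?_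
  have hsing : ({(z, w)} : Set ((X × Y) × (X × Y))) = {z} ×ˢ {w} :=
    (Set.singleton_prod_singleton).symm
  have h2 : ENNReal.ofReal |ωX z.1 w.1 - ωY z.2 w.2| ^ (2 : ℝ)
      = ENNReal.ofReal ((ωX z.1 w.1 - ωY z.2 w.2) ^ 2) := by
    rw [ENNReal.ofReal_rpow_of_nonneg (abs_nonneg _) (by norm_num : (0:ℝ) ≤ 2)]
    congr 1
    rw [show (2 : ℝ) = ((2 : ℕ) : ℝ) by norm_num, Real.rpow_natCast, sq_abs]
  rw [hsing, Measure.prod_prod, h2, ENNReal.ofReal_mul (sq_nonneg _),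
    ENNReal.ofReal_mul ENNReal.toReal_nonneg,
    ENNReal.ofReal_toReal (measure_ne_top π _), ENNReal.ofReal_toReal (measure_ne_top π _)]

lemma row_sum_of_fst (π : Measure (X × Y)) [IsProbabilityMeasure π]
    (hfst : π.map Prod.fst = unifFin X) (x : X) :
    ∑ y, (π {(x, y)}).toReal = ((Fintype.card X : ℝ))⁻¹ := by
  classical
  have h1 : (π.map Prod.fst) {x} = π (Prod.fst ⁻¹' {x}) :=
    Measure.map_apply (measurable_of_countable _) (measurableSet_singleton x)
  have h2 : (Prod.fst ⁻¹' {x} : Set (X × Y)) = ↑(({x} : Finset X) ×ˢ (Finset.univ : Finset Y)) := by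
    ext ⟨a, b⟩
    simp [eq_comm]
  have h3 : π (Prod.fst ⁻¹' {x}) = ∑ y, π {(x, y)} := by
    rw [h2, measure_finset_sum, Finset.sum_product, Finset.sum_singleton]
  have h4 : ∑ y, π {(x, y)} = (Fintype.card X : ℝ≥0∞)⁻¹ := by
    rw [← h3, ← h1, hfst, unifFin_singleton]
  have h5 := congrArg ENNReal.toReal h4
  rw [ENNReal.toReal_sum (fun y _ => measure_ne_top π _), ENNReal.toReal_inv,
    ENNReal.toReal_natCast] at h5
  exact h5

lemma col_sum_of_snd (π : Measure (X × Y)) [IsProbabilityMeasure π]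
    (hsnd : π.map Prod.snd = unifFin Y) (y : Y) :
    ∑ x, (π {(x, y)}).toReal = ((Fintype.card Y : ℝ))⁻¹ := by
  classical
  have h1 : (π.map Prod.snd) {y} = π (Prod.snd ⁻¹' {y}) :=
    Measure.map_apply (measurable_of_countable _) (measurableSet_singleton y)
  have h2 : (Prod.snd ⁻¹' {y} : Set (X × Y)) = ↑((Finset.univ : Finset X) ×ˢ ({y} : Finset Y)) := by
    ext ⟨a, b⟩
    simp [eq_comm]
  have h3 : π (Prod.snd ⁻¹' {y}) = ∑ x, π {(x, y)} := by
    rw [h2, measure_finset_sum, Finset.sum_product]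
    exact Finset.sum_congr rfl fun x _ => Finset.sum_singleton _ _
  have h4 : ∑ x, π {(x, y)} = (Fintype.card Y : ℝ≥0∞)⁻¹ := by
    rw [← h3, ← h1, hsnd, unifFin_singleton]
  have h5 := congrArg ENNReal.toReal h4
  rw [ENNReal.toReal_sum (fun x _ => measure_ne_top π _), ENNReal.toReal_inv,
    ENNReal.toReal_natCast] at h5
  exact h5

lemma map_pair_singleton [DecidableEq Y] (μ : Measure X) (g : X → Y) (q : X × Y) :
    (μ.map fun a => (a, g a)) {q} = if q.2 = g q.1 then μ {q.1} else 0 := by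
  classical
  obtain ⟨x, y⟩ := q
  have hpre : ((fun a => (a, g a)) ⁻¹' {(x, y)} : Set X)
      = if y = g x then ({x} : Set X) else ∅ := by
    ext a
    by_cases h : y = g x
    · simp only [if_pos h, Set.mem_preimage, Set.mem_singleton_iff, Prod.mk.injEq]
      constructor
      · rintro ⟨rfl, _⟩; rfl
      · rintro rfl; exact ⟨rfl, h.symm⟩
    · simp only [if_neg h, Set.mem_preimage, Set.mem_singleton_iff, Prod.mk.injEq,
        Set.mem_empty_iff_false, iff_false]
      rintro ⟨rfl, hy⟩; exact h hy.symm
  rw [Measure.map_apply (measurable_of_countable _) (measurableSet_singleton _), hpre]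
  split_ifs <;> simp

lemma unifFin_map_equiv (φ : X ≃ Y) (hcard : Fintype.card X = Fintype.card Y) :
    (unifFin X).map ⇑φ = unifFin Y := by
  refine measure_ext_singleton fun y => ?_
  rw [Measure.map_apply (measurable_of_countable _) (measurableSet_singleton _)]
  have hpre : (⇑φ ⁻¹' {y} : Set X) = {φ.symm y} := by
    ext a
    simp [Equiv.apply_eq_iff_eq_symm_apply]
  rw [hpre, unifFin_singleton, unifFin_singleton, hcard]

end MeasureXY

end GWAux

/-- Proposition `prop:positive_definite`: for measure networks on `n`-point
sets with uniform measures and symmetric positive definite network function matrices, the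
Gromov–Wasserstein 2-distance is realized by a measure-preserving bijection; in particular
`GW₂ = GM₂`. -/
theorem gw2_realized_by_monge_map_of_posDef
    {n : ℕ} (hn : 0 < n)
    {X Y : Type} [Fintype X] [MeasurableSpace X] [MeasurableSingletonClass X]
    [Fintype Y] [MeasurableSpace Y] [MeasurableSingletonClass Y]
    (hX : Fintype.card X = n) (hY : Fintype.card Y = n)
    (ωX : X → X → ℝ) (ωY : Y → Y → ℝ)
    (hposX : (Matrix.of ωX).PosDef) (hposY : (Matrix.of ωY).PosDef) :
    ∃ φ : X ≃ Y, Measurable φ ∧ (unifFin X).map φ = unifFin Y ∧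
      dis2Fin ωX ωY ((unifFin X).map fun x => (x, φ x)) =
        gw2Fin ωX ωY (unifFin X) (unifFin Y) ∧
      gw2Fin ωX ωY (unifFin X) (unifFin Y) = gm2Fin ωX ωY (unifFin X) (unifFin Y) := by
  classical
  have hcX : Fintype.card X ≠ 0 := by rw [hX]; exact hn.ne'
  have hcY : Fintype.card Y ≠ 0 := by rw [hY]; exact hn.ne'
  haveI hPX : IsProbabilityMeasure (unifFin X) := GWAux.unifFin_prob hcX
  haveI hPY : IsProbabilityMeasure (unifFin Y) := GWAux.unifFin_prob hcY
  set r : ℝ := (n : ℝ)⁻¹ with hr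
  let e : X ≃ Fin n := Fintype.equivFinOfCardEq hX
  let f : Y ≃ Fin n := Fintype.equivFinOfCardEq hY
  have hA : (Matrix.of ωX).PosSemidef := hposX.posSemidef
  have hB : (Matrix.of ωY).PosSemidef := hposY.posSemidef
  have hA' : ∀ x x', ωX x x' = ωX x' x := fun x x' => by
    have h := congrFun (congrFun hposX.isHermitian x) x'
    simpa [Matrix.conjTranspose_apply] using h.symm
  have hB' : ∀ y y', ωY y y' = ωY y' y := fun y y' => by
    have h := congrFun (congrFun hposY.isHermitian y) y'
    simpa [Matrix.conjTranspose_apply] using h.symm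
  -- generic facts about couplings induced by maps
  have hprob_pair : ∀ ψ : X → Y,
      IsProbabilityMeasure ((unifFin X).map fun x => (x, ψ x)) := fun ψ =>
    Measure.isProbabilityMeasure_map (measurable_of_countable _).aemeasurable
  have hfst_pair : ∀ ψ : X → Y,
      ((unifFin X).map fun x => (x, ψ x)).map Prod.fst = unifFin X := by
    intro ψ
    rw [Measure.map_map measurable_fst (measurable_of_countable _)]
    have h : (Prod.fst ∘ fun x : X => (x, ψ x)) = id := rfl
    rw [h, Measure.map_id]
  have hsnd_pair : ∀ ψ : X → Y,
      ((unifFin X).map fun x => (x, ψ x)).map Prod.snd = (unifFin X).map ψ := by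
    intro ψ
    rw [Measure.map_map measurable_snd (measurable_of_countable _)]
    rfl
  have hmapeq : ∀ ψ : X ≃ Y, (unifFin X).map ⇑ψ = unifFin Y := fun ψ =>
    GWAux.unifFin_map_equiv ψ (hX.trans hY.symm)
  -- density of the coupling induced by a map
  have hdens : ∀ (ψ : X → Y),
      (fun p : X × Y => ((((unifFin X).map fun x => (x, ψ x))) {p}).toReal)
        = fun p : X × Y => if p.2 = ψ p.1 then r else 0 := by
    intro ψ
    funext p
    rw [GWAux.map_pair_singleton (unifFin X) ψ p]
    by_cases h : p.2 = ψ p.1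
    · rw [if_pos h, if_pos h, GWAux.unifFin_singleton, hX, hr]
      simp
    · rw [if_neg h, if_neg h]
      simp
  have hdis : ∀ ψ : X → Y,
      dis2Fin ωX ωY ((unifFin X).map fun x => (x, ψ x))
        = ENNReal.ofReal (GWAux.fsQ ωX ωY (fun p : X × Y => if p.2 = ψ p.1 then r else 0))
            ^ ((1 : ℝ) / 2) := by
    intro ψ
    haveI := hprob_pair ψ
    rw [GWAux.dis2Fin_eq_fsQ, hdens ψ]
  -- choose the best permutation
  obtain ⟨σ₀, -, hσ₀⟩ := Finset.exists_min_image Finset.univ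
    (fun σ : Equiv.Perm (Fin n) => GWAux.fsQ ωX ωY (GWAux.permV r e f σ)) Finset.univ_nonempty
  set φ : X ≃ Y := (e.trans σ₀).trans f.symm with hφ
  have hvφ : ∀ σ : Equiv.Perm (Fin n),
      (fun p : X × Y => if p.2 = ((e.trans σ).trans f.symm) p.1 then r else 0)
        = GWAux.permV r e f σ := fun σ => rfl
  -- the key bound against an arbitrary coupling
  have hkey : ∀ π : Measure (X × Y), IsProbabilityMeasure π →
      π.map Prod.fst = unifFin X → π.map Prod.snd = unifFin Y →
      dis2Fin ωX ωY ((unifFin X).map fun x => (x, φ x)) ≤ dis2Fin ωX ωY π := by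
    intro π hπ h1 h2
    haveI := hπ
    have hu0 : ∀ p : X × Y, 0 ≤ (π {p}).toReal := fun p => ENNReal.toReal_nonneg
    have hrowu : ∀ x, ∑ y, (π {(x, y)}).toReal = r := by
      intro x
      have h := GWAux.row_sum_of_fst π h1 x
      rw [hX] at h
      exact h
    have hcolu : ∀ y, ∑ x, (π {(x, y)}).toReal = r := by
      intro y
      have h := GWAux.col_sum_of_snd π h2 y
      rw [hY] at h
      exact h
    obtain ⟨σ, hσ⟩ := GWAux.exists_perm_le hn e f ωX ωY hA hB hA' hB'
      (fun p => (π {p}).toReal) hu0 hrowu hcolu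
    rw [GWAux.dis2Fin_eq_fsQ ωX ωY π, hdis ⇑φ, hφ, hvφ σ₀]
    refine ENNReal.rpow_le_rpow (ENNReal.ofReal_le_ofReal ?_) (by norm_num)
    exact le_trans (hσ₀ σ (Finset.mem_univ σ)) hσ
  -- the coupling induced by φ
  have hprobφ : IsProbabilityMeasure ((unifFin X).map fun x => (x, φ x)) := hprob_pair ⇑φ
  have hsndφ : ((unifFin X).map fun x => (x, φ x)).map Prod.snd = unifFin Y := by
    rw [hsnd_pair ⇑φ]
    exact hmapeq φ
  have hgw_le : gw2Fin ωX ωY (unifFin X) (unifFin Y)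
      ≤ dis2Fin ωX ωY ((unifFin X).map fun x => (x, φ x)) := by
    refine iInf_le_of_le ((unifFin X).map fun x => (x, φ x)) ?_
    refine iInf_le_of_le hprobφ ?_
    exact iInf_le _ ⟨hfst_pair ⇑φ, hsndφ⟩
  have hgw_ge : dis2Fin ωX ωY ((unifFin X).map fun x => (x, φ x))
      ≤ gw2Fin ωX ωY (unifFin X) (unifFin Y) :=
    le_iInf fun π => le_iInf fun h1 => le_iInf fun h2 => hkey π h1 h2.1 h2.2
  have hgw : dis2Fin ωX ωY ((unifFin X).map fun x => (x, φ x))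
      = gw2Fin ωX ωY (unifFin X) (unifFin Y) := le_antisymm hgw_ge hgw_le
  have hgm_le : gm2Fin ωX ωY (unifFin X) (unifFin Y)
      ≤ dis2Fin ωX ωY ((unifFin X).map fun x => (x, φ x)) := by
    refine iInf_le_of_le ⇑φ ?_
    refine iInf_le_of_le (measurable_of_countable _) ?_
    exact iInf_le _ (hmapeq φ)
  have hgw_le_gm : gw2Fin ωX ωY (unifFin X) (unifFin Y)
      ≤ gm2Fin ωX ωY (unifFin X) (unifFin Y) := by
    refine le_iInf fun g => le_iInf fun hg => le_iInf fun hmap => ?_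
    refine iInf_le_of_le ((unifFin X).map fun x => (x, g x)) ?_
    refine iInf_le_of_le (hprob_pair g) ?_
    refine iInf_le_of_le ⟨hfst_pair g, by rw [hsnd_pair g, hmap]⟩ le_rfl
  exact ⟨φ, measurable_of_countable _, hmapeq φ, hgw,
    le_antisymm hgw_le_gm (hgm_le.trans hgw.le)⟩
end

section
/- Let A, B ∈ ℝ^{n×n} be symmetric positive definite matrices and let K = {π ∈ ℝ^{n×n} : π_{ij} ≥ 0 for all i,j, and every row sum and every column sum of π equals 1/n}. Then the maximum of the function π ↦ ⟨Aπ, πB⟩ (Frobenius inner product) over K is attained at a matrix of the form (1/n)P, where P is a permutation matrix. -/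
open Matrix

/-- The Frobenius inner product of two real square matrices. -/
def frobInner {n : ℕ} (M N : Matrix (Fin n) (Fin n) ℝ) : ℝ :=
  ∑ i, ∑ j, M i j * N i j

/-- The polytope of `n × n` matrices with nonnegative entries all of whose row sums and
column sums equal `1/n` (i.e. `(1/n)` times the bistochastic matrices). -/
def couplingPolytope (n : ℕ) : Set (Matrix (Fin n) (Fin n) ℝ) :=
  {π | (∀ i j, 0 ≤ π i j) ∧ (∀ i, ∑ j, π i j = (n : ℝ)⁻¹) ∧ (∀ j, ∑ i, π i j = (n : ℝ)⁻¹)}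

section Aux

variable {n : ℕ}

open scoped MatrixOrder

lemma trace_tmul_self_nonneg (M : Matrix (Fin n) (Fin n) ℝ) : 0 ≤ (Mᵀ * M).trace := by
  simp only [trace, Matrix.diag, mul_apply, transpose_apply]
  exact Finset.sum_nonneg fun j _ => Finset.sum_nonneg fun i _ => mul_self_nonneg _

lemma phi_symm (A B x y : Matrix (Fin n) (Fin n) ℝ) (hAt : Aᵀ = A) (hBt : Bᵀ = B) :
    (xᵀ * A * y * B).trace = (yᵀ * A * x * B).trace := by
  conv_lhs => rw [← trace_transpose]
  simp only [transpose_mul, transpose_transpose, hAt, hBt]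
  rw [show B * (yᵀ * (A * x)) = B * (yᵀ * A * x) by simp [Matrix.mul_assoc],
    trace_mul_comm]

lemma phi_nonneg (A B : Matrix (Fin n) (Fin n) ℝ) (hA : A.PosDef) (hB : B.PosDef)
    (z : Matrix (Fin n) (Fin n) ℝ) : 0 ≤ (zᵀ * A * z * B).trace := by
  set C := CFC.sqrt A
  set D := CFC.sqrt B
  have hC : C * C = A := CFC.sqrt_mul_sqrt_self A hA.posSemidef.nonneg
  have hD : D * D = B := CFC.sqrt_mul_sqrt_self B hB.posSemidef.nonneg
  have hCt : Cᵀ = C := by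
    have := (CFC.sqrt_nonneg A).posSemidef.isHermitian.eq
    rwa [conjTranspose_eq_transpose_of_trivial] at this
  have hDt : Dᵀ = D := by
    have := (CFC.sqrt_nonneg B).posSemidef.isHermitian.eq
    rwa [conjTranspose_eq_transpose_of_trivial] at this
  have h1 : (C*z*D)ᵀ * (C*z*D) = D * (zᵀ * (C * (C * (z * D)))) := by
    simp [transpose_mul, hCt, hDt, Matrix.mul_assoc]
  calc (0:ℝ) ≤ ((C*z*D)ᵀ * (C*z*D)).trace := trace_tmul_self_nonneg _
    _ = (zᵀ * A * z * B).trace := by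
        rw [h1, trace_mul_comm, ← hC, ← hD]
        simp [Matrix.mul_assoc]

lemma frobInner_eq_trace (M N : Matrix (Fin n) (Fin n) ℝ) :
    frobInner M N = (Mᵀ * N).trace := by
  simp only [frobInner, trace, Matrix.diag, mul_apply, transpose_apply]
  rw [Finset.sum_comm]

lemma scaled_perm_mem (hn : 0 < n) (σ : Equiv.Perm (Fin n)) :
    ((n : ℝ)⁻¹ • (σ.permMatrix ℝ)) ∈ couplingPolytope n := by
  obtain ⟨h0, h1, h2⟩ := mem_doublyStochastic_iff_sum.1
    (permMatrix_mem_doublyStochastic (σ := σ) (R := ℝ))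
  refine ⟨fun i j => ?_, fun i => ?_, fun j => ?_⟩
  · exact mul_nonneg (by positivity) (h0 i j)
  · simp only [Matrix.smul_apply, smul_eq_mul, ← Finset.mul_sum, h1, mul_one]
  · simp only [Matrix.smul_apply, smul_eq_mul, ← Finset.mul_sum, h2, mul_one]

lemma mem_scale (hn : 0 < n) {π : Matrix (Fin n) (Fin n) ℝ}
    (hπ : π ∈ couplingPolytope n) : (n : ℝ) • π ∈ doublyStochastic ℝ (Fin n) := by
  obtain ⟨h0, h1, h2⟩ := hπ
  have hne : (n : ℝ) ≠ 0 := Nat.cast_ne_zero.2 hn.ne'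
  refine mem_doublyStochastic_iff_sum.2 ⟨fun i j => ?_, fun i => ?_, fun j => ?_⟩
  · exact mul_nonneg (by positivity) (h0 i j)
  · simp only [Matrix.smul_apply, smul_eq_mul, ← Finset.mul_sum, h1 i, mul_inv_cancel₀ hne]
  · simp only [Matrix.smul_apply, smul_eq_mul, ← Finset.mul_sum, h2 j, mul_inv_cancel₀ hne]

end Aux

/-- for symmetric positive definite `A, B ∈ ℝ^{n×n}`, the maximum of
`π ↦ ⟨Aπ, πB⟩` (Frobenius inner product) over the polytope `K` of matrices with
nonnegative entries and all row and column sums equal to `1/n` is attained at a scaled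
permutation matrix `(1/n)P`. -/
theorem frobenius_quadratic_max_at_permutation
    {n : ℕ} (hn : 0 < n) (A B : Matrix (Fin n) (Fin n) ℝ)
    (hA : A.PosDef) (hB : B.PosDef) :
    ∃ σ : Equiv.Perm (Fin n),
      ((n : ℝ)⁻¹ • (σ.permMatrix ℝ)) ∈ couplingPolytope n ∧
      ∀ π ∈ couplingPolytope n,
        frobInner (A * π) (π * B) ≤
          frobInner (A * ((n : ℝ)⁻¹ • (σ.permMatrix ℝ))) (((n : ℝ)⁻¹ • (σ.permMatrix ℝ)) * B) := by
  classical
  have hAt : Aᵀ = A := by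
    have := hA.isHermitian.eq
    rwa [conjTranspose_eq_transpose_of_trivial] at this
  have hBt : Bᵀ = B := by
    have := hB.isHermitian.eq
    rwa [conjTranspose_eq_transpose_of_trivial] at this
  set Φ : Matrix (Fin n) (Fin n) ℝ → Matrix (Fin n) (Fin n) ℝ → ℝ :=
    fun x y => (xᵀ * A * y * B).trace with hΦdef
  have hfrob : ∀ x : Matrix (Fin n) (Fin n) ℝ, frobInner (A * x) (x * B) = Φ x x := by
    intro x
    rw [frobInner_eq_trace]
    simp only [hΦdef, transpose_mul, hAt, Matrix.mul_assoc]
  have hcross : ∀ x y, 2 * Φ x y ≤ Φ x x + Φ y y := by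
    intro x y
    have h := phi_nonneg A B hA hB (x - y)
    simp only [transpose_sub, Matrix.sub_mul, Matrix.mul_sub, trace_sub] at h
    have hs := phi_symm A B x y hAt hBt
    simp only [hΦdef]
    linarith
  set v : Equiv.Perm (Fin n) → Matrix (Fin n) (Fin n) ℝ :=
    fun σ => (n : ℝ)⁻¹ • (σ.permMatrix ℝ) with hvdef
  obtain ⟨σs, -, hσs⟩ := Finset.exists_max_image (Finset.univ : Finset (Equiv.Perm (Fin n)))
    (fun σ => Φ (v σ) (v σ)) Finset.univ_nonempty
  refine ⟨σs, scaled_perm_mem hn σs, fun π hπ => ?_⟩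
  obtain ⟨w, hw0, hw1, hwsum⟩ := exists_eq_sum_perm_of_mem_doublyStochastic (mem_scale hn hπ)
  have hne : (n : ℝ) ≠ 0 := Nat.cast_ne_zero.2 hn.ne'
  have hπeq : π = ∑ σ, w σ • v σ := by
    calc π = (n : ℝ)⁻¹ • ((n : ℝ) • π) := by rw [smul_smul, inv_mul_cancel₀ hne, one_smul]
      _ = (n : ℝ)⁻¹ • ∑ σ, w σ • σ.permMatrix ℝ := by rw [hwsum]
      _ = ∑ σ, w σ • v σ := by
          rw [Finset.smul_sum]
          simp [hvdef, smul_smul, mul_comm]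
  rw [hfrob, hfrob]
  have hexp : Φ π π = ∑ σ, ∑ τ, w σ * (w τ * Φ (v σ) (v τ)) := by
    rw [hπeq]
    simp only [hΦdef, transpose_sum, transpose_smul, Finset.sum_mul, Finset.mul_sum,
      smul_mul_assoc, mul_smul_comm, trace_sum, trace_smul, smul_eq_mul]
    exact Finset.sum_congr rfl fun σ _ => Finset.sum_congr rfl fun τ _ => by
      rw [phi_symm A B (v τ) (v σ) hAt hBt]
  rw [hexp]
  calc ∑ σ, ∑ τ, w σ * (w τ * Φ (v σ) (v τ))
      ≤ ∑ σ, ∑ τ, w σ * (w τ * Φ (v σs) (v σs)) := by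
        refine Finset.sum_le_sum fun σ _ => Finset.sum_le_sum fun τ _ => ?_
        have h1 := hcross (v σ) (v τ)
        have h2 := hσs σ (Finset.mem_univ σ)
        have h3 := hσs τ (Finset.mem_univ τ)
        have h4 : Φ (v σ) (v τ) ≤ Φ (v σs) (v σs) := by linarith
        exact mul_le_mul_of_nonneg_left
          (mul_le_mul_of_nonneg_left h4 (hw0 τ)) (hw0 σ)
    _ = Φ (v σs) (v σs) := by
        simp only [← Finset.mul_sum, ← Finset.sum_mul, hw1, one_mul]
end

section
/- Let 𝒳 and 𝒴 be metric measure spaces and p ∈ [1,∞). Then GW_p(𝒳,𝒴) = inf_𝒵 GM_p(𝒵,𝒴), where the infimum is taken over all mass splittings 𝒵 of 𝒳. -/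
open MeasureTheory ENNReal

/-- The `p`-distortion (`p ∈ [1,∞)`) of a coupling between measure networks. -/
noncomputable def disP {X Y : Type} [MeasurableSpace X] [MeasurableSpace Y]
    (ωX : X → X → ℝ) (ωY : Y → Y → ℝ) (p : ℝ) (π : Measure (X × Y)) : ℝ≥0∞ :=
  (∫⁻ q : (X × Y) × (X × Y),
      ENNReal.ofReal |ωX q.1.1 q.2.1 - ωY q.1.2 q.2.2| ^ p ∂(π.prod π)) ^ (1 / p)

/-- The Gromov–Wasserstein `p`-distance (`p ∈ [1,∞)`) between measure networks. -/
noncomputable def gwP {X Y : Type} [MeasurableSpace X] [MeasurableSpace Y]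
    (ωX : X → X → ℝ) (ωY : Y → Y → ℝ) (μX : Measure X) (μY : Measure Y) (p : ℝ) : ℝ≥0∞ :=
  ⨅ (π : Measure (X × Y)) (_ : IsProbabilityMeasure π)
    (_ : π.map Prod.fst = μX ∧ π.map Prod.snd = μY), disP ωX ωY p π

/-- The Gromov–Monge `p`-distance (`p ∈ [1,∞)`) between measure networks (`⊤` if there is
no measure-preserving map). -/
noncomputable def gmP {X Y : Type} [MeasurableSpace X] [MeasurableSpace Y]
    (ωX : X → X → ℝ) (ωY : Y → Y → ℝ) (μX : Measure X) (μY : Measure Y) (p : ℝ) : ℝ≥0∞ :=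
  ⨅ (φ : X → Y) (_ : Measurable φ) (_ : μX.map φ = μY),
    disP ωX ωY p (μX.map fun x => (x, φ x))

/-- A mass splitting of a metric measure space `(X, dist, μX)`: a measure network `𝒵`
(on a Polish space, with fully supported Borel probability measure) together with a
measure-preserving map `ρ : Z → X`, whose network function is the pullback `ρ* d_X`. -/
structure MassSplitting (X : Type) [MetricSpace X] [MeasurableSpace X] (μX : Measure X) where
  Z : Type
  mZ : MeasurableSpace Z
  tZ : TopologicalSpace Z
  polish : @PolishSpace Z tZ
  borel : @BorelSpace Z tZ mZ
  μZ : @Measure Z mZ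
  prob : @IsProbabilityMeasure Z mZ μZ
  fullSupp : @MeasureTheory.Measure.IsOpenPosMeasure Z tZ mZ μZ
  ρ : Z → X
  meas_ρ : @Measurable Z X mZ _ ρ
  push : @Measure.map Z X mZ _ ρ μZ = μX

/-- The network function of a mass splitting: the pullback of the metric of `X`. -/
noncomputable def MassSplitting.ω {X : Type} [MetricSpace X] [MeasurableSpace X]
    {μX : Measure X} (S : MassSplitting X μX) : S.Z → S.Z → ℝ :=
  fun z z' => dist (S.ρ z) (S.ρ z')


open Set TopologicalSpace

section Support

variable {A : Type} [TopologicalSpace A] [MeasurableSpace A]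
  [SecondCountableTopology A]

/-- The (topological) support of a measure. -/
def msupp (π : Measure A) : Set A := {a | ∀ U : Set A, IsOpen U → a ∈ U → 0 < π U}

lemma isClosed_msupp (π : Measure A) : IsClosed (msupp π) := by
  rw [← isOpen_compl_iff, isOpen_iff_mem_nhds]
  intro a ha
  simp only [msupp, mem_compl_iff, mem_setOf_eq] at ha
  push_neg at ha
  obtain ⟨U, hU, haU, hπU⟩ := ha
  refine Filter.mem_of_superset (hU.mem_nhds haU) fun y hy => ?_
  simp only [msupp, mem_compl_iff, mem_setOf_eq]
  push_neg
  exact ⟨U, hU, hy, hπU⟩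

lemma msupp_compl_null (π : Measure A) : π (msupp π)ᶜ = 0 := by
  have hcover : (msupp π)ᶜ ⊆ ⋃₀ {b ∈ countableBasis A | π b = 0} := by
    intro a ha
    simp only [msupp, mem_compl_iff, mem_setOf_eq] at ha
    push_neg at ha
    obtain ⟨U, hU, haU, hπU⟩ := ha
    obtain ⟨b, hb, hab, hbU⟩ :=
      (isBasis_countableBasis A).exists_subset_of_mem_open haU hU
    exact ⟨b, ⟨hb, le_antisymm ((measure_mono hbU).trans hπU) (zero_le)⟩, hab⟩
  refine measure_mono_null hcover ?_
  exact (measure_sUnion_null_iff ((countable_countableBasis A).mono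
    (sep_subset _ _))).2 fun b hb => hb.2

end Support

lemma disP_map {W X Y : Type} [MeasurableSpace W] [MeasurableSpace X] [MeasurableSpace Y]
    (ωX : X → X → ℝ) (ωY : Y → Y → ℝ)
    (hωX : Measurable fun q : X × X => ωX q.1 q.2)
    (hωY : Measurable fun q : Y × Y => ωY q.1 q.2)
    (p : ℝ) (μ : Measure W) [SFinite μ] {f : W → X × Y} (hf : Measurable f) :
    disP ωX ωY p (μ.map f) =
      (∫⁻ w : W × W, ENNReal.ofReal |ωX (f w.1).1 (f w.2).1 - ωY (f w.1).2 (f w.2).2| ^ p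
        ∂(μ.prod μ)) ^ (1 / p) := by
  have h1 : Measurable fun q : (X × Y) × (X × Y) => ωX q.1.1 q.2.1 :=
    hωX.comp (measurable_fst.fst.prodMk measurable_snd.fst)
  have h2 : Measurable fun q : (X × Y) × (X × Y) => ωY q.1.2 q.2.2 :=
    hωY.comp (measurable_fst.snd.prodMk measurable_snd.snd)
  have hg : Measurable fun q : (X × Y) × (X × Y) =>
      ENNReal.ofReal |ωX q.1.1 q.2.1 - ωY q.1.2 q.2.2| ^ p :=
    ((h1.sub h2).abs.ennreal_ofReal).pow_const p
  unfold disP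
  rw [Measure.map_prod_map _ _ hf hf, lintegral_map hg (hf.prodMap hf)]
  rfl

/-- Theorem `thm:monge_wasserstein_comparison`: for metric measure spaces
`𝒳`, `𝒴` and `p ∈ [1,∞)`, the Gromov–Wasserstein `p`-distance equals the infimum of the
Gromov–Monge `p`-distances `GM_p(𝒵,𝒴)` over all mass splittings `𝒵` of `𝒳`. -/
theorem gromovWasserstein_eq_iInf_massSplitting_gromovMonge
    {X Y : Type} [MetricSpace X] [PolishSpace X] [MeasurableSpace X] [BorelSpace X]
    [MetricSpace Y] [PolishSpace Y] [MeasurableSpace Y] [BorelSpace Y]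
    (μX : Measure X) [IsProbabilityMeasure μX] [μX.IsOpenPosMeasure]
    (μY : Measure Y) [IsProbabilityMeasure μY] [μY.IsOpenPosMeasure]
    (p : ℝ) (hp : 1 ≤ p) :
    gwP (fun x x' => dist x x') (fun y y' => dist y y') μX μY p =
      ⨅ S : MassSplitting X μX,
        @gmP S.Z Y S.mZ _ S.ω (fun y y' => dist y y') S.μZ μY p := by
  have hdX : Measurable fun q : X × X => dist q.1 q.2 := measurable_dist
  have hdY : Measurable fun q : Y × Y => dist q.1 q.2 := measurable_dist
  apply le_antisymm
  · refine le_iInf fun S => ?_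
    letI := S.mZ
    haveI := S.prob
    unfold gwP gmP
    refine le_iInf fun φ => le_iInf fun hφ => le_iInf fun hpush => ?_
    set f : S.Z → X × Y := fun z => (S.ρ z, φ z) with hfdef
    have hfm : Measurable f := S.meas_ρ.prodMk hφ
    haveI hprob : IsProbabilityMeasure (S.μZ.map f) :=
      Measure.isProbabilityMeasure_map hfm.aemeasurable
    refine iInf_le_of_le (S.μZ.map f) (iInf_le_of_le hprob (iInf_le_of_le ⟨?_, ?_⟩
      (le_of_eq ?_)))
    · rw [Measure.map_map measurable_fst hfm]; exact S.push
    · rw [Measure.map_map measurable_snd hfm]; exact hpush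
    · have hωZ : Measurable fun q : S.Z × S.Z => S.ω q.1 q.2 :=
        measurable_dist.comp ((S.meas_ρ.comp measurable_fst).prodMk
          (S.meas_ρ.comp measurable_snd))
      rw [disP_map _ _ hdX hdY p S.μZ hfm,
        disP_map S.ω _ hωZ hdY p S.μZ
          (show Measurable fun z : S.Z => (z, φ z) from measurable_id.prodMk hφ)]
      rfl
  · unfold gwP
    refine le_iInf fun π => le_iInf fun hπprob => le_iInf fun hmarg => ?_
    haveI := hπprob
    obtain ⟨h1, h2⟩ := hmarg
    set s : Set (X × Y) := msupp π with hsdef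
    have hs_closed : IsClosed s := isClosed_msupp π
    have hs_meas : MeasurableSet s := hs_closed.measurableSet
    have hnull : π sᶜ = 0 := msupp_compl_null π
    haveI : PolishSpace s := hs_closed.polishSpace
    set ν : Measure s := π.comap (↑) with hνdef
    have hemb : MeasurableEmbedding ((↑) : s → X × Y) :=
      MeasurableEmbedding.subtype_coe hs_meas
    have hmapν : ν.map (↑) = π := by
      rw [hνdef, map_comap_subtype_coe hs_meas, Measure.restrict_eq_self_of_ae_mem]
      rw [MeasureTheory.ae_iff]
      exact hnull
    have hπs : π s = 1 := by
      have h := measure_add_measure_compl (μ := π) hs_meas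
      rwa [hnull, add_zero, measure_univ] at h
    haveI hνprob : IsProbabilityMeasure ν := by
      constructor
      rw [hνdef, hemb.comap_apply, Set.image_univ, Subtype.range_coe]
      exact hπs
    haveI hνpos : ν.IsOpenPosMeasure := by
      constructor
      intro V hV hVne
      obtain ⟨U, hU, rfl⟩ := isOpen_induced_iff.1 hV
      obtain ⟨⟨z, hz⟩, hzV⟩ := hVne
      rw [hνdef, hemb.comap_preimage, Subtype.range_coe, measure_inter_conull hnull]
      exact (hz U hU hzV).ne'
    set Sπ : MassSplitting X μX :=
      { Z := s, mZ := inferInstance, tZ := inferInstance, polish := inferInstance,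
        borel := inferInstance, μZ := ν, prob := hνprob, fullSupp := hνpos,
        ρ := fun z => (z : X × Y).1,
        meas_ρ := measurable_fst.comp measurable_subtype_coe,
        push := by
          show Measure.map (Prod.fst ∘ Subtype.val) ν = μX
          rw [← Measure.map_map measurable_fst measurable_subtype_coe, hmapν, h1] } with hSdef
    refine iInf_le_of_le Sπ ?_
    unfold gmP
    set φ : s → Y := fun z => (z : X × Y).2 with hφdef
    have hφm : Measurable φ := measurable_snd.comp measurable_subtype_coe
    refine iInf_le_of_le φ (iInf_le_of_le hφm (iInf_le_of_le ?_ (le_of_eq ?_)))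
    · show Measure.map (Prod.snd ∘ Subtype.val) ν = μY
      rw [← Measure.map_map measurable_snd measurable_subtype_coe, hmapν, h2]
    · have hωZ : Measurable fun q : Sπ.Z × Sπ.Z => Sπ.ω q.1 q.2 :=
        measurable_dist.comp ((Sπ.meas_ρ.comp measurable_fst).prodMk
          (Sπ.meas_ρ.comp measurable_snd))
      conv_rhs => rw [← hmapν]
      rw [disP_map Sπ.ω _ hωZ hdY p ν
          (show Measurable fun z : Sπ.Z => (z, φ z) from measurable_id.prodMk hφm),
        disP_map _ _ hdX hdY p ν measurable_subtype_coe]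
      rfl
end

section
/- For all metric measure spaces 𝒳, 𝒴 and every p ∈ [1,∞], (1/2)·GM_p(𝒳,𝒴) ≤ GM^em_p(𝒳,𝒴). -/
open MeasureTheory ENNReal

/-- The Wasserstein `p`-distance (`p ∈ [1,∞]`) between two Borel measures on a metric
space, as an infimum over couplings. -/
noncomputable def wassersteinD (Z : Type) [MetricSpace Z] [MeasurableSpace Z]
    (μ ν : Measure Z) (p : ℝ≥0∞) : ℝ≥0∞ :=
  ⨅ (π : Measure (Z × Z)) (_ : IsProbabilityMeasure π)
    (_ : π.map Prod.fst = μ ∧ π.map Prod.snd = ν),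
    if p = ⊤ then
      ⨆ (z : Z × Z) (_ : ∀ U ∈ nhds z, 0 < π U), ENNReal.ofReal (dist z.1 z.2)
    else
      (∫⁻ z : Z × Z, ENNReal.ofReal (dist z.1 z.2) ^ p.toReal ∂π) ^ (1 / p.toReal)

/-- The Monge `p`-distance (`p ∈ [1,∞]`) between two Borel measures on a metric space:
the infimum over measure-preserving maps `φ` of the `L^p(μ)`-norm of `z ↦ d(z, φ z)`
(for `p = ∞`, of the supremum of `d(z, φ z)` over the support of `μ`); it is `⊤` when no
measure-preserving map exists. -/
noncomputable def mongeD (Z : Type) [MetricSpace Z] [MeasurableSpace Z]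
    (μ ν : Measure Z) (p : ℝ≥0∞) : ℝ≥0∞ :=
  ⨅ (φ : Z → Z) (_ : Measurable φ) (_ : μ.map φ = ν),
    if p = ⊤ then
      ⨆ (z : Z) (_ : ∀ U ∈ nhds z, 0 < μ U), ENNReal.ofReal (dist z (φ z))
    else
      (∫⁻ z : Z, ENNReal.ofReal (dist z (φ z)) ^ p.toReal ∂μ) ^ (1 / p.toReal)

/-- `φ : X → Z` is an isometric embedding of the metric `dX` into the metric space `Z`. -/
def isoEmb {X Z : Type} (dX : X → X → ℝ) [MetricSpace Z] (φ : X → Z) : Prop :=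
  ∀ a b : X, dist (φ a) (φ b) = dX a b

/-- The embedding Gromov–Wasserstein `p`-distance between metric measure spaces
`(X, dX, μX)` and `(Y, dY, μY)`: the infimum of Wasserstein distances between the
pushforwards under isometric embeddings into a common ambient metric space. -/
noncomputable def gwEm {X Y : Type} [MeasurableSpace X] [MeasurableSpace Y]
    (dX : X → X → ℝ) (dY : Y → Y → ℝ) (μX : Measure X) (μY : Measure Y) (p : ℝ≥0∞) : ℝ≥0∞ :=
  ⨅ (Z : Type) (iZ : MetricSpace Z) (φX : X → Z) (φY : Y → Z)
    (_ : @isoEmb X Z dX iZ φX) (_ : @isoEmb Y Z dY iZ φY),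
    @wassersteinD Z iZ (borel Z)
      (@Measure.map X Z _ (borel Z) φX μX) (@Measure.map Y Z _ (borel Z) φY μY) p

/-- The embedding Gromov–Monge `p`-distance between metric measure spaces: the infimum of
Monge distances between the pushforwards under isometric embeddings into a common ambient
metric space. -/
noncomputable def gmEm {X Y : Type} [MeasurableSpace X] [MeasurableSpace Y]
    (dX : X → X → ℝ) (dY : Y → Y → ℝ) (μX : Measure X) (μY : Measure Y) (p : ℝ≥0∞) : ℝ≥0∞ :=
  ⨅ (Z : Type) (iZ : MetricSpace Z) (φX : X → Z) (φY : Y → Z)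
    (_ : @isoEmb X Z dX iZ φX) (_ : @isoEmb Y Z dY iZ φY),
    @mongeD Z iZ (borel Z)
      (@Measure.map X Z _ (borel Z) φX μX) (@Measure.map Y Z _ (borel Z) φY μY) p

/-- The `p`-distortion (`p ∈ [1,∞]`) of a map `φ` between metric measure spaces. -/
noncomputable def disMapMM {X Y : Type} [MetricSpace X] [MetricSpace Y] [MeasurableSpace X]
    (μX : Measure X) (p : ℝ≥0∞) (φ : X → Y) : ℝ≥0∞ :=
  if p = ⊤ then
    ⨆ (x : X) (x' : X), ENNReal.ofReal |dist x x' - dist (φ x) (φ x')|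
  else
    (∫⁻ q : X × X,
      ENNReal.ofReal |dist q.1 q.2 - dist (φ q.1) (φ q.2)| ^ p.toReal ∂(μX.prod μX)) ^ (1 / p.toReal)

/-- The Gromov–Monge `p`-distance (`p ∈ [1,∞]`) between metric measure spaces: the infimum
of `p`-distortions over measure-preserving maps (`⊤` if there is none). -/
noncomputable def gmMM {X Y : Type} [MetricSpace X] [MetricSpace Y]
    [MeasurableSpace X] [MeasurableSpace Y]
    (μX : Measure X) (μY : Measure Y) (p : ℝ≥0∞) : ℝ≥0∞ :=
  ⨅ (φ : X → Y) (_ : Measurable φ) (_ : μX.map φ = μY), disMapMM μX p φ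


open Set in
/-- Auxiliary: an isometric copy of a Polish space admits a measurable retraction and
has measurable range. -/
lemma retract_aux {Y Z : Type} [MetricSpace Y] [PolishSpace Y] [MeasurableSpace Y] [BorelSpace Y]
    [MetricSpace Z] [MeasurableSpace Z] [BorelSpace Z]
    (φY : Y → Z) (hY : Isometry φY) (y₀ : Y) :
    ∃ r : Z → Y, Measurable r ∧ (∀ y, r (φY y) = y) ∧ MeasurableSet (Set.range φY) := by
  set D : Set Z := closure (Set.range φY) with hD
  have hDclosed : IsClosed D := isClosed_closure
  have hDmeas : MeasurableSet D := hDclosed.measurableSet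
  have hDsep : TopologicalSpace.IsSeparable D :=
    (TopologicalSpace.isSeparable_range hY.continuous).closure
  haveI : TopologicalSpace.SeparableSpace D := hDsep.separableSpace
  haveI : SecondCountableTopology D := UniformSpace.secondCountable_of_separable D
  have hmem : ∀ y, φY y ∈ D := fun y => subset_closure (mem_range_self y)
  set φYD : Y → D := fun y => ⟨φY y, hmem y⟩ with hφYD
  have hφYDc : Continuous φYD := Continuous.subtype_mk hY.continuous _
  have hφYDinj : Function.Injective φYD := by
    intro a b h
    exact hY.injective (congrArg Subtype.val h)
  have hembD : MeasurableEmbedding φYD := hφYDc.measurable.measurableEmbedding hφYDinj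
  have hvalemb : MeasurableEmbedding (Subtype.val : D → Z) :=
    MeasurableEmbedding.subtype_coe hDmeas
  have hcomp : φY = Subtype.val ∘ φYD := rfl
  have hemb : MeasurableEmbedding φY := by rw [hcomp]; exact hvalemb.comp hembD
  exact ⟨Function.extend φY id (fun _ => y₀),
    hemb.measurable_extend measurable_id measurable_const,
    fun y => hY.injective.extend_apply _ _ y, hemb.measurableSet_range⟩

open Set in
/-- Auxiliary: distance between two measurable maps with separable ranges is measurable. -/
lemma meas_dist_aux {X Z : Type} [MeasurableSpace X] [MetricSpace Z] [MeasurableSpace Z]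
    [BorelSpace Z] (f g : X → Z) (hf : Measurable f) (hg : Measurable g)
    (hsep : TopologicalSpace.IsSeparable (Set.range f ∪ Set.range g)) :
    Measurable fun x => dist (f x) (g x) := by
  set D : Set Z := closure (Set.range f ∪ Set.range g) with hD
  haveI : TopologicalSpace.SeparableSpace D := hsep.closure.separableSpace
  haveI : SecondCountableTopology D := UniformSpace.secondCountable_of_separable D
  have hfm : ∀ x, f x ∈ D := fun x => subset_closure (Or.inl (mem_range_self x))
  have hgm : ∀ x, g x ∈ D := fun x => subset_closure (Or.inr (mem_range_self x))
  have : (fun x => dist (f x) (g x)) = fun x => dist (⟨f x, hfm x⟩ : D) (⟨g x, hgm x⟩ : D) := by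
    funext x; rw [Subtype.dist_eq]
  rw [this]
  exact Measurable.dist (hf.subtype_mk) (hg.subtype_mk)

open Set in
/-- Auxiliary: `z ↦ dist z (ψ z)` is a.e.-measurable when a.e. point and image lie in a
separable set. -/
lemma aemeas_dist_aux {Z : Type} [MetricSpace Z] [MeasurableSpace Z] [BorelSpace Z]
    (μ : Measure Z) (ψ : Z → Z) (hψ : Measurable ψ) (T : Set Z)
    (hT : TopologicalSpace.IsSeparable T) (hmem : ∀ᵐ z ∂μ, z ∈ T ∧ ψ z ∈ T) :
    AEMeasurable (fun z => dist z (ψ z)) μ := by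
  classical
  by_cases hne : ∃ z, z ∈ T
  · obtain ⟨z₁, hz₁⟩ := hne
    set D : Set Z := closure T with hD
    have hDmeas : MeasurableSet D := isClosed_closure.measurableSet
    haveI : TopologicalSpace.SeparableSpace D := hT.closure.separableSpace
    haveI : SecondCountableTopology D := UniformSpace.secondCountable_of_separable D
    have hz₁D : z₁ ∈ D := subset_closure hz₁
    have hvalemb : MeasurableEmbedding (Subtype.val : D → Z) :=
      MeasurableEmbedding.subtype_coe hDmeas
    set χ : Z → D := Function.extend Subtype.val id (fun _ => (⟨z₁, hz₁D⟩ : D)) with hχ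
    have hχm : Measurable χ := hvalemb.measurable_extend measurable_id measurable_const
    have hχval : ∀ z (hz : z ∈ D), χ z = ⟨z, hz⟩ := by
      intro z hz
      have := Subtype.val_injective.extend_apply id
        (fun _ => (⟨z₁, hz₁D⟩ : D)) (⟨z, hz⟩ : D)
      simpa [hχ] using this
    refine ⟨fun z => dist (χ z) (χ (ψ z)), Measurable.dist hχm (hχm.comp hψ), ?_⟩
    filter_upwards [hmem] with z hz
    have h1 : z ∈ D := subset_closure hz.1
    have h2 : ψ z ∈ D := subset_closure hz.2
    rw [hχval z h1, hχval (ψ z) h2, Subtype.dist_eq]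
  · have : μ = 0 := by
      have h0 : ∀ᵐ z ∂μ, False := by
        filter_upwards [hmem] with z hz
        exact hne ⟨z, hz.1⟩
      simpa [ae_iff] using h0
    rw [this]
    exact aemeasurable_zero_measure

open Set in
/-- Auxiliary key estimate: the Gromov–Monge distance is bounded by twice the Monge cost of
any measure-preserving map between isometric copies in a common ambient space. -/
lemma key_aux {X Y Z : Type} [MetricSpace X] [PolishSpace X] [MeasurableSpace X] [BorelSpace X]
    [MetricSpace Y] [PolishSpace Y] [MeasurableSpace Y] [BorelSpace Y]
    [MetricSpace Z] [MeasurableSpace Z] [BorelSpace Z]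
    (μX : Measure X) [IsProbabilityMeasure μX] [μX.IsOpenPosMeasure]
    (μY : Measure Y) [IsProbabilityMeasure μY]
    (φX : X → Z) (φY : Y → Z) (hX : Isometry φX) (hY : Isometry φY)
    (ψ : Z → Z) (hψ : Measurable ψ) (hmap : (μX.map φX).map ψ = μY.map φY)
    (p : ℝ≥0∞) (hp : 1 ≤ p) :
    gmMM μX μY p ≤ 2 * (if p = ⊤ then
      ⨆ (z : Z) (_ : ∀ U ∈ nhds z, 0 < (μX.map φX) U), ENNReal.ofReal (dist z (ψ z))
    else
      (∫⁻ z : Z, ENNReal.ofReal (dist z (ψ z)) ^ p.toReal ∂(μX.map φX)) ^ (1 / p.toReal)) := by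
  classical
  have hXne : Nonempty X := by
    by_contra h
    rw [not_nonempty_iff] at h
    have := measure_univ (μ := μX)
    rw [Set.univ_eq_empty_iff.mpr h, measure_empty] at this
    exact zero_ne_one this
  have hYne : Nonempty Y := by
    by_contra h
    rw [not_nonempty_iff] at h
    have := measure_univ (μ := μY)
    rw [Set.univ_eq_empty_iff.mpr h, measure_empty] at this
    exact zero_ne_one this
  obtain ⟨y₀⟩ := hYne
  have hφXm : Measurable φX := hX.continuous.measurable
  have hφYm : Measurable φY := hY.continuous.measurable
  obtain ⟨r, hrm, hrφY, hSmeas⟩ := retract_aux φY hY y₀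
  set S : Set Z := Set.range φY with hSdef
  have hφYr : ∀ z ∈ S, φY (r z) = z := by rintro z ⟨y, rfl⟩; rw [hrφY]
  set G : Set X := (fun x => ψ (φX x)) ⁻¹' S with hGdef
  have hGmeas : MeasurableSet G := (hψ.comp hφXm) hSmeas
  have hψS : ((μX.map φX).map ψ) Sᶜ = 0 := by
    rw [hmap, Measure.map_apply hφYm hSmeas.compl]
    have : φY ⁻¹' Sᶜ = ∅ := by ext y; simp [hSdef]
    rw [this, measure_empty]
  have hGfull : μX Gᶜ = 0 := by
    have h1 : μX Gᶜ = ((μX.map φX).map ψ) Sᶜ := by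
      rw [Measure.map_apply hψ hSmeas.compl, Measure.map_apply hφXm (hψ hSmeas.compl)]
      rfl
    rw [h1, hψS]
  have hGae : ∀ᵐ x ∂μX, x ∈ G := by
    rw [ae_iff]
    exact hGfull
  set φ₀ : X → Y := fun x => r (ψ (φX x)) with hφ₀
  have hφ₀m : Measurable φ₀ := hrm.comp (hψ.comp hφXm)
  have hmap₀ : μX.map φ₀ = μY := by
    have h1 : μX.map φ₀ = ((μX.map φX).map ψ).map r := by
      rw [Measure.map_map hψ hφXm, Measure.map_map hrm (hψ.comp hφXm)]
      rfl
    rw [h1, hmap, Measure.map_map hrm hφYm]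
    have : r ∘ φY = id := funext hrφY
    rw [this, Measure.map_id]
  have hgood : ∀ x ∈ G, φY (φ₀ x) = ψ (φX x) := fun x hx => hφYr _ hx
  rcases eq_or_ne p ⊤ with hptop | hptop
  · -- case p = ⊤
    subst hptop
    rw [if_pos rfl]
    set C := ⨆ (z : Z) (_ : ∀ U ∈ nhds z, 0 < (μX.map φX) U), ENNReal.ofReal (dist z (ψ z))
      with hCdef
    rcases eq_or_ne C ⊤ with hC | hCne
    · rw [hC, ENNReal.mul_top (by norm_num)]
      exact le_top
    set c := C.toReal with hcdef
    have hc0 : 0 ≤ c := ENNReal.toReal_nonneg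
    have hsupp : ∀ x : X, ∀ U ∈ nhds (φX x), 0 < (μX.map φX) U := by
      intro x U hU
      obtain ⟨t, htU, hto, hxt⟩ := mem_nhds_iff.mp hU
      have ht : 0 < (μX.map φX) t := by
        rw [Measure.map_apply hφXm hto.measurableSet]
        exact (hX.continuous.isOpen_preimage _ hto).measure_pos μX ⟨x, hxt⟩
      exact lt_of_lt_of_le ht (measure_mono htU)
    have hdistC : ∀ x : X, ENNReal.ofReal (dist (φX x) (ψ (φX x))) ≤ C := fun x =>
      le_iSup₂ (f := fun z (_ : ∀ U ∈ nhds z, 0 < (μX.map φX) U) =>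
        ENNReal.ofReal (dist z (ψ z))) (φX x) (hsupp x)
    have hdistc : ∀ x : X, dist (φX x) (ψ (φX x)) ≤ c := by
      intro x
      have := ENNReal.toReal_mono hCne (hdistC x)
      rwa [ENNReal.toReal_ofReal dist_nonneg] at this
    have claimA : ∀ (x : X) (δ : ℝ), 0 < δ → ∃ y : Y, dist (φY y) (φX x) ≤ c + δ := by
      intro x δ hδ
      set A : Set Z := Metric.ball (φX x) δ ∩ ψ ⁻¹' S with hA
      have hApos : 0 < (μX.map φX) A := by
        rw [hA, measure_inter_conull ?hn]
        case hn =>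
          have hcompl : (ψ ⁻¹' S)ᶜ = ψ ⁻¹' Sᶜ := rfl
          rw [hcompl, ← Measure.map_apply hψ hSmeas.compl, hψS]
        exact hsupp x _ (Metric.ball_mem_nhds _ hδ)
      have hne : (φX ⁻¹' A).Nonempty := by
        by_contra h
        rw [not_nonempty_iff_eq_empty] at h
        have hAm : MeasurableSet A := Metric.isOpen_ball.measurableSet.inter (hψ hSmeas)
        rw [Measure.map_apply hφXm hAm, h, measure_empty] at hApos
        exact lt_irrefl _ hApos
      obtain ⟨x₁, hx₁⟩ := hne
      obtain ⟨hball, hpre⟩ := hx₁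
      obtain ⟨y, hy⟩ := hpre
      refine ⟨y, ?_⟩
      calc dist (φY y) (φX x) ≤ dist (φY y) (φX x₁) + dist (φX x₁) (φX x) := dist_triangle _ _ _
        _ ≤ c + δ := by
            refine add_le_add ?_ (le_of_lt hball)
            rw [hy, dist_comm]
            exact hdistc x₁
    have hfin : ∀ ε : ℝ, 0 < ε →
        gmMM μX μY ⊤ ≤ 2 * C + (ENNReal.ofReal ε + ENNReal.ofReal ε) := by
      intro ε hε
      have hε4 : 0 < ε / 4 := by positivity
      choose yfun hyfun using fun x => claimA x (ε / 4) hε4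
      obtain ⟨s, hsc, hscov⟩ := TopologicalSpace.countable_cover_nhds (α := X)
        (f := fun x => Metric.ball x (ε / 4)) (fun x => Metric.ball_mem_nhds x hε4)
      have hsne : s.Nonempty := by
        rcases s.eq_empty_or_nonempty with h | h
        · exfalso
          rw [h] at hscov
          simp only [Set.mem_empty_iff_false, Set.iUnion_of_empty, Set.iUnion_empty] at hscov
          obtain ⟨x⟩ := hXne
          exact (Set.eq_empty_iff_forall_notMem.mp hscov.symm) x (Set.mem_univ x)
        · exact h
      obtain ⟨e, he⟩ := hsc.exists_eq_range hsne
      have hcov2 : ∀ x : X, ∃ n, x ∈ Metric.ball (e n) (ε / 4) := by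
        intro x
        have hx : x ∈ ⋃ y ∈ s, Metric.ball y (ε / 4) := hscov ▸ Set.mem_univ x
        rw [Set.mem_iUnion₂] at hx
        obtain ⟨y, hy, hxy⟩ := hx
        rw [he] at hy
        obtain ⟨n, rfl⟩ := hy
        exact ⟨n, hxy⟩
      set sel : X → Y := fun x => yfun (e (Nat.find (hcov2 x))) with hseldef
      have hselm : Measurable sel :=
        Measurable.find (f := fun n _ => yfun (e n)) (fun n => measurable_const)
          (fun n => Metric.isOpen_ball.measurableSet) hcov2
      have hsel : ∀ x, dist (φY (sel x)) (φX x) ≤ c + ε / 2 := by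
        intro x
        have hxball := Nat.find_spec (hcov2 x)
        calc dist (φY (sel x)) (φX x)
            ≤ dist (φY (sel x)) (φX (e (Nat.find (hcov2 x))))
              + dist (φX (e (Nat.find (hcov2 x)))) (φX x) := dist_triangle _ _ _
          _ ≤ (c + ε / 4) + ε / 4 := by
              refine add_le_add (hyfun _) ?_
              rw [hX.dist_eq]
              rw [Metric.mem_ball, dist_comm] at hxball
              exact le_of_lt hxball
          _ = c + ε / 2 := by ring
      set φ : X → Y := G.piecewise φ₀ sel with hφdef
      have hφm : Measurable φ := Measurable.piecewise hGmeas hφ₀m hselm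
      have hφae : φ =ᵐ[μX] φ₀ := by
        filter_upwards [hGae] with x hx
        exact Set.piecewise_eq_of_mem _ _ _ hx
      have hmapφ : μX.map φ = μY := by rw [Measure.map_congr hφae, hmap₀]
      have hkeypt : ∀ x, dist (φX x) (φY (φ x)) ≤ c + ε := by
        intro x
        by_cases hx : x ∈ G
        · rw [hφdef, Set.piecewise_eq_of_mem _ _ _ hx]
          rw [hgood x hx]
          exact le_trans (hdistc x) (by linarith)
        · rw [hφdef, Set.piecewise_eq_of_notMem _ _ _ hx, dist_comm]
          exact le_trans (hsel x) (by linarith)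
      have hdis : disMapMM μX ⊤ φ
          = ⨆ (x : X) (x' : X), ENNReal.ofReal |dist x x' - dist (φ x) (φ x')| := by
        rw [disMapMM, if_pos rfl]
      refine le_trans (le_trans
        (iInf_le_of_le φ (iInf_le_of_le hφm (iInf_le_of_le hmapφ le_rfl)))
        (le_of_eq hdis)) ?_
      refine iSup_le fun x => iSup_le fun x' => ?_
      have hreal : |dist x x' - dist (φ x) (φ x')| ≤ (c + ε) + (c + ε) := by
        have h1 : dist x x' = dist (φX x) (φX x') := (hX.dist_eq x x').symm
        have h2 : dist (φ x) (φ x') = dist (φY (φ x)) (φY (φ x')) := (hY.dist_eq _ _).symm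
        rw [h1, h2, ← Real.dist_eq]
        exact le_trans (dist_dist_dist_le _ _ _ _) (add_le_add (hkeypt x) (hkeypt x'))
      calc ENNReal.ofReal |dist x x' - dist (φ x) (φ x')|
          ≤ ENNReal.ofReal ((c + ε) + (c + ε)) := ENNReal.ofReal_le_ofReal hreal
        _ = (C + ENNReal.ofReal ε) + (C + ENNReal.ofReal ε) := by
            rw [ENNReal.ofReal_add (by positivity) (by positivity),
              ENNReal.ofReal_add hc0 hε.le, ENNReal.ofReal_toReal hCne]
        _ = 2 * C + (ENNReal.ofReal ε + ENNReal.ofReal ε) := by ring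
    refine ENNReal.le_of_forall_pos_le_add ?_
    intro η hη hlt
    have hη2 : (0 : ℝ) < (η : ℝ) / 2 := by
      have : (0 : ℝ) < (η : ℝ) := hη
      linarith
    refine le_trans (hfin ((η : ℝ) / 2) hη2) ?_
    have heq : ENNReal.ofReal ((η : ℝ) / 2) + ENNReal.ofReal ((η : ℝ) / 2) = (η : ℝ≥0∞) := by
      rw [← ENNReal.ofReal_add (by positivity) (by positivity), add_halves]
      exact ENNReal.ofReal_coe_nnreal
    rw [heq]
  · -- case p < ⊤
    rw [if_neg hptop]
    set pr := p.toReal with hprdef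
    have hpr1 : (1 : ℝ) ≤ pr := by
      have := ENNReal.toReal_mono hptop hp
      simpa using this
    have hpr0 : (0 : ℝ) < pr := lt_of_lt_of_le one_pos hpr1
    set φ : X → Y := G.piecewise φ₀ (fun _ => y₀) with hφdef
    have hφm : Measurable φ := Measurable.piecewise hGmeas hφ₀m measurable_const
    have hφae : φ =ᵐ[μX] φ₀ := by
      filter_upwards [hGae] with x hx
      exact Set.piecewise_eq_of_mem _ _ _ hx
    have hmapφ : μX.map φ = μY := by
      rw [Measure.map_congr hφae, hmap₀]
    have hφeq : ∀ x ∈ G, φ x = φ₀ x := fun x hx => Set.piecewise_eq_of_mem _ _ _ hx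
    set F : X → ℝ := fun x => dist (φX x) (φY (φ x)) with hFdef
    have hFm : Measurable F := by
      refine meas_dist_aux φX (fun x => φY (φ x)) hφXm (hφYm.comp hφm) ?_
      refine TopologicalSpace.IsSeparable.mono ?_
        (Set.union_subset_union (subset_refl _) (Set.range_comp_subset_range φ φY))
      exact (TopologicalSpace.isSeparable_range hX.continuous).union
        (TopologicalSpace.isSeparable_range hY.continuous)
    have hFnn : ∀ x, 0 ≤ F x := fun x => dist_nonneg
    have hbound : ∀ x ∈ G, ∀ x' ∈ G,
        |dist x x' - dist (φ x) (φ x')| ≤ F x + F x' := by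
      intro x hx x' hx'
      have h1 : dist x x' = dist (φX x) (φX x') := (hX.dist_eq x x').symm
      have h2 : dist (φ x) (φ x') = dist (φY (φ x)) (φY (φ x')) := (hY.dist_eq _ _).symm
      rw [h1, h2, ← Real.dist_eq]
      exact dist_dist_dist_le _ _ _ _
    have haeprod : ∀ᵐ q : X × X ∂(μX.prod μX), q.1 ∈ G ∧ q.2 ∈ G := by
      rw [ae_iff]
      have hsub : {q : X × X | ¬(q.1 ∈ G ∧ q.2 ∈ G)} ⊆ (Gᶜ ×ˢ univ) ∪ (univ ×ˢ Gᶜ) := by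
        intro q hq
        simp only [mem_setOf_eq, not_and_or] at hq
        rcases hq with h | h
        · exact Or.inl ⟨h, trivial⟩
        · exact Or.inr ⟨trivial, h⟩
      refine le_antisymm ?_ zero_le
      calc (μX.prod μX) {q : X × X | ¬(q.1 ∈ G ∧ q.2 ∈ G)}
          ≤ (μX.prod μX) ((Gᶜ ×ˢ univ) ∪ (univ ×ˢ Gᶜ)) := measure_mono hsub
        _ ≤ (μX.prod μX) (Gᶜ ×ˢ univ) + (μX.prod μX) (univ ×ˢ Gᶜ) := measure_union_le _ _
        _ = 0 := by rw [Measure.prod_prod, Measure.prod_prod, hGfull]; simp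
    have step1 : ∫⁻ q : X × X,
        ENNReal.ofReal |dist q.1 q.2 - dist (φ q.1) (φ q.2)| ^ pr ∂(μX.prod μX)
        ≤ ∫⁻ q : X × X,
          (ENNReal.ofReal (F q.1) + ENNReal.ofReal (F q.2)) ^ pr ∂(μX.prod μX) := by
      refine lintegral_mono_ae ?_
      filter_upwards [haeprod] with q hq
      refine ENNReal.rpow_le_rpow ?_ hpr0.le
      rw [← ENNReal.ofReal_add (hFnn q.1) (hFnn q.2)]
      exact ENNReal.ofReal_le_ofReal (hbound q.1 hq.1 q.2 hq.2)
    have hhm : Measurable fun x => ENNReal.ofReal (F x) ^ pr :=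
      ENNReal.continuous_rpow_const.measurable.comp (ENNReal.measurable_ofReal.comp hFm)
    have step2 : (∫⁻ q : X × X,
          (ENNReal.ofReal (F q.1) + ENNReal.ofReal (F q.2)) ^ pr ∂(μX.prod μX)) ^ (1 / pr)
        ≤ (∫⁻ q : X × X, ENNReal.ofReal (F q.1) ^ pr ∂(μX.prod μX)) ^ (1 / pr)
          + (∫⁻ q : X × X, ENNReal.ofReal (F q.2) ^ pr ∂(μX.prod μX)) ^ (1 / pr) :=
      ENNReal.lintegral_Lp_add_le
        ((ENNReal.measurable_ofReal.comp (hFm.comp measurable_fst)).aemeasurable)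
        ((ENNReal.measurable_ofReal.comp (hFm.comp measurable_snd)).aemeasurable) hpr1
    have hmarg1 : ∫⁻ q : X × X, ENNReal.ofReal (F q.1) ^ pr ∂(μX.prod μX)
        = ∫⁻ x, ENNReal.ofReal (F x) ^ pr ∂μX := by
      rw [← lintegral_map hhm measurable_fst, Measure.map_fst_prod, measure_univ, one_smul]
    have hmarg2 : ∫⁻ q : X × X, ENNReal.ofReal (F q.2) ^ pr ∂(μX.prod μX)
        = ∫⁻ x, ENNReal.ofReal (F x) ^ pr ∂μX := by
      rw [← lintegral_map hhm measurable_snd, Measure.map_snd_prod, measure_univ, one_smul]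
    have hcae : AEMeasurable (fun z => ENNReal.ofReal (dist z (ψ z)) ^ pr) (μX.map φX) := by
      have h1 : AEMeasurable (fun z => dist z (ψ z)) (μX.map φX) := by
        refine aemeas_dist_aux _ ψ hψ (closure (Set.range φX) ∪ S) ?_ ?_
        · exact ((TopologicalSpace.isSeparable_range hX.continuous).closure).union
            (TopologicalSpace.isSeparable_range hY.continuous)
        · have hz : ∀ᵐ z ∂(μX.map φX), z ∈ closure (Set.range φX) := by
            rw [ae_iff, Measure.map_apply hφXm]
            · have : φX ⁻¹' {z | z ∉ closure (Set.range φX)} = ∅ := by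
                ext x
                simp only [mem_preimage, mem_setOf_eq, mem_empty_iff_false, iff_false, not_not]
                exact subset_closure (mem_range_self x)
              rw [this, measure_empty]
            · exact (isClosed_closure.measurableSet).compl
          have hz2 : ∀ᵐ z ∂(μX.map φX), ψ z ∈ S := by
            rw [ae_iff]
            have : {z | ψ z ∉ S} = ψ ⁻¹' Sᶜ := rfl
            rw [this, ← Measure.map_apply hψ hSmeas.compl, hψS]
          filter_upwards [hz, hz2] with z h1 h2
          exact ⟨Or.inl h1, Or.inr h2⟩
      exact (ENNReal.continuous_rpow_const.measurable.comp
        ENNReal.measurable_ofReal).comp_aemeasurable h1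
    have step4 : ∫⁻ x, ENNReal.ofReal (F x) ^ pr ∂μX
        = ∫⁻ z, ENNReal.ofReal (dist z (ψ z)) ^ pr ∂(μX.map φX) := by
      rw [lintegral_map' hcae hφXm.aemeasurable]
      refine lintegral_congr_ae ?_
      filter_upwards [hGae] with x hx
      rw [hFdef]
      simp only
      rw [hφeq x hx, hgood x hx]
    calc gmMM μX μY p ≤ disMapMM μX p φ :=
          iInf_le_of_le φ (iInf_le_of_le hφm (iInf_le_of_le hmapφ le_rfl))
      _ = (∫⁻ q : X × X,
            ENNReal.ofReal |dist q.1 q.2 - dist (φ q.1) (φ q.2)| ^ pr ∂(μX.prod μX)) ^ (1 / pr) := by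
          rw [disMapMM, if_neg hptop]
      _ ≤ (∫⁻ q : X × X,
            (ENNReal.ofReal (F q.1) + ENNReal.ofReal (F q.2)) ^ pr ∂(μX.prod μX)) ^ (1 / pr) :=
          ENNReal.rpow_le_rpow step1 (by positivity)
      _ ≤ (∫⁻ q : X × X, ENNReal.ofReal (F q.1) ^ pr ∂(μX.prod μX)) ^ (1 / pr)
          + (∫⁻ q : X × X, ENNReal.ofReal (F q.2) ^ pr ∂(μX.prod μX)) ^ (1 / pr) := step2
      _ = 2 * ((∫⁻ z, ENNReal.ofReal (dist z (ψ z)) ^ pr ∂(μX.map φX)) ^ (1 / pr)) := by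
          rw [hmarg1, hmarg2, step4, two_mul]

/-- Theorem `thm:gromov_monge_reformulation`, inequality: for all metric
measure spaces `𝒳`, `𝒴` and every `p ∈ [1,∞]`, `(1/2)·GM_p(𝒳,𝒴) ≤ GM^em_p(𝒳,𝒴)`. -/
theorem half_gromovMonge_le_gmEm
    {X Y : Type} [MetricSpace X] [PolishSpace X] [MeasurableSpace X] [BorelSpace X]
    [MetricSpace Y] [PolishSpace Y] [MeasurableSpace Y] [BorelSpace Y]
    (μX : Measure X) [IsProbabilityMeasure μX] [μX.IsOpenPosMeasure]
    (μY : Measure Y) [IsProbabilityMeasure μY] [μY.IsOpenPosMeasure]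
    (p : ℝ≥0∞) (hp : 1 ≤ p) :
    (2 : ℝ≥0∞)⁻¹ * gmMM μX μY p ≤
      gmEm (fun x x' => dist x x') (fun y y' => dist y y') μX μY p := by
  simp only [gmEm]
  refine le_iInf fun Z => le_iInf fun iZ => le_iInf fun φX => le_iInf fun φY =>
    le_iInf fun hiX => le_iInf fun hiY => ?_
  letI : MeasurableSpace Z := borel Z
  haveI : BorelSpace Z := ⟨rfl⟩
  have hX : Isometry φX := Isometry.of_dist_eq fun a b => hiX a b
  have hY : Isometry φY := Isometry.of_dist_eq fun a b => hiY a b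
  simp only [mongeD]
  refine le_iInf fun ψ => le_iInf fun hψ => le_iInf fun hmapψ => ?_
  have hk := key_aux μX μY φX φY hX hY ψ hψ hmapψ p hp
  calc (2 : ℝ≥0∞)⁻¹ * gmMM μX μY p
      ≤ (2 : ℝ≥0∞)⁻¹ * (2 * (if p = ⊤ then
          ⨆ (z : Z) (_ : ∀ U ∈ nhds z, 0 < (μX.map φX) U), ENNReal.ofReal (dist z (ψ z))
        else
          (∫⁻ z : Z, ENNReal.ofReal (dist z (ψ z)) ^ p.toReal ∂(μX.map φX)) ^ (1 / p.toReal))) :=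
        mul_le_mul_right hk _
    _ = _ := by
        rw [← mul_assoc, ENNReal.inv_mul_cancel (by norm_num) (by norm_num), one_mul]
end

section
/- For all metric measure spaces 𝒳 and 𝒴, (1/2)·GM_∞(𝒳,𝒴) = GM^em_∞(𝒳,𝒴). -/
open MeasureTheory ENNReal

section Aux

open Set Function Metric

lemma nonempty_of_prob {α : Type} [MeasurableSpace α] (μ : Measure α)
    [IsProbabilityMeasure μ] : Nonempty α := by
  by_contra h
  rw [not_nonempty_iff] at h
  have h1 : μ Set.univ = 1 := measure_univ
  rw [Set.univ_eq_empty_iff.2 h, measure_empty] at h1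
  exact zero_ne_one h1

variable {X Y : Type} [MetricSpace X] [PolishSpace X] [MeasurableSpace X] [BorelSpace X]
    [MetricSpace Y] [PolishSpace Y] [MeasurableSpace Y] [BorelSpace Y]
    (μX : Measure X) (μY : Measure Y)

lemma gmEm_le_ofReal [IsProbabilityMeasure μX]
    (T : X → Y) (hTm : Measurable T) (hTmap : μX.map T = μY) (r : ℝ) (hr : 0 < r)
    (H : ∀ p q : X, |dist p q - dist (T p) (T q)| ≤ 2 * r) :
    gmEm (fun x x' => dist x x') (fun y y' => dist y y') μX μY ⊤ ≤ ENNReal.ofReal r := by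
  haveI : Nonempty X := nonempty_of_prob μX
  letI iZ : MetricSpace (X ⊕ Y) := Metric.glueMetricApprox (id : X → X) T r hr
    (fun p q => H p q)
  letI mZ : MeasurableSpace (X ⊕ Y) := borel _
  haveI : BorelSpace (X ⊕ Y) := ⟨rfl⟩
  have hdd : ∀ p q : X ⊕ Y, dist p q = Metric.glueDist (id : X → X) T r p q := fun _ _ => rfl
  have hisoX : Isometry (Sum.inl : X → X ⊕ Y) := Isometry.of_dist_eq fun a b => rfl
  have hisoY : Isometry (Sum.inr : Y → X ⊕ Y) := Isometry.of_dist_eq fun a b => rfl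
  have hmeasX : Measurable (Sum.inl : X → X ⊕ Y) := hisoX.continuous.measurable
  have hmeasY : Measurable (Sum.inr : Y → X ⊕ Y) := hisoY.continuous.measurable
  have hembX : MeasurableEmbedding (Sum.inl : X → X ⊕ Y) :=
    hisoX.continuous.measurableEmbedding Sum.inl_injective
  have hembY : MeasurableEmbedding (Sum.inr : Y → X ⊕ Y) :=
    hisoY.continuous.measurableEmbedding Sum.inr_injective
  set ψ : X ⊕ Y → X ⊕ Y := Sum.elim (fun x => Sum.inr (T x)) Sum.inr with hψdef
  have hψmeas : Measurable ψ := by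
    intro S hS
    have hpre : ψ ⁻¹' S = Sum.inl '' (T ⁻¹' (Sum.inr ⁻¹' S)) ∪ Sum.inr '' (Sum.inr ⁻¹' S) := by
      ext z
      cases z with
      | inl x => simp [ψ]
      | inr y => simp [ψ]
    rw [hpre]
    exact (hembX.measurableSet_image' (hTm (hmeasY hS))).union
      (hembY.measurableSet_image' (hmeasY hS))
  have hmapψ : (μX.map Sum.inl).map ψ = μY.map Sum.inr := by
    rw [Measure.map_map hψmeas hmeasX]
    have h1 : ψ ∘ Sum.inl = Sum.inr ∘ T := rfl
    rw [h1, ← Measure.map_map hmeasY hTm, hTmap]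
  have hopen : IsOpen (Set.range (Sum.inr : Y → X ⊕ Y)) := by
    rw [Metric.isOpen_iff]
    rintro _ ⟨y, rfl⟩
    refine ⟨r, hr, fun w hw => ?_⟩
    rw [Metric.mem_ball] at hw
    cases w with
    | inl x =>
      exfalso
      have := Metric.le_glueDist_inl_inr (id : X → X) T r x y
      rw [← hdd] at this
      exact absurd hw (not_lt.2 this)
    | inr y' => exact ⟨y', rfl⟩
  have step1 : gmEm (fun x x' => dist x x') (fun y y' => dist y y') μX μY ⊤ ≤
      @mongeD (X ⊕ Y) iZ mZ (μX.map Sum.inl) (μY.map Sum.inr) ⊤ := by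
    refine iInf_le_of_le (X ⊕ Y) ?_
    refine iInf_le_of_le iZ ?_
    refine iInf_le_of_le Sum.inl ?_
    refine iInf_le_of_le Sum.inr ?_
    refine iInf_le_of_le (fun a b => rfl) ?_
    exact iInf_le _ (fun a b => rfl)
  refine step1.trans ?_
  have step2 : @mongeD (X ⊕ Y) iZ mZ (μX.map Sum.inl) (μY.map Sum.inr) ⊤ ≤
      ⨆ (z : X ⊕ Y) (_ : ∀ U ∈ nhds z, 0 < (μX.map Sum.inl) U),
        ENNReal.ofReal (dist z (ψ z)) := by
    rw [mongeD]
    refine iInf_le_of_le ψ (iInf_le_of_le hψmeas (iInf_le_of_le hmapψ ?_))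
    rw [if_pos rfl]
  refine step2.trans ?_
  refine iSup₂_le fun z hz => ?_
  cases z with
  | inr y =>
    exfalso
    have h0 : (μX.map Sum.inl) (Set.range (Sum.inr : Y → X ⊕ Y)) = 0 := by
      rw [Measure.map_apply hmeasX hopen.measurableSet]
      convert measure_empty (μ := μX)
      ext x
      simp
    have := hz _ (hopen.mem_nhds ⟨y, rfl⟩)
    rw [h0] at this
    exact lt_irrefl 0 this
  | inl x =>
    have : dist (Sum.inl x : X ⊕ Y) (ψ (Sum.inl x)) = r := by
      show dist (Sum.inl x : X ⊕ Y) (Sum.inr (T x)) = r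
      have := Metric.glueDist_glued_points (Z := X) (id : X → X) T r x
      rw [← hdd] at this
      exact this
    rw [this]

end Aux
section Aux2

open Set Function Metric

variable {X Y : Type} [MetricSpace X] [PolishSpace X] [MeasurableSpace X] [BorelSpace X]
    [MetricSpace Y] [PolishSpace Y] [MeasurableSpace Y] [BorelSpace Y]
    (μX : Measure X) (μY : Measure Y)

lemma gmEm_le_half [IsProbabilityMeasure μX] :
    gmEm (fun x x' => dist x x') (fun y y' => dist y y') μX μY ⊤ ≤
      (2 : ℝ≥0∞)⁻¹ * gmMM μX μY ⊤ := by
  have h2 : 2 * gmEm (fun x x' => dist x x') (fun y y' => dist y y') μX μY ⊤ ≤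
      gmMM μX μY ⊤ := by
    rw [gmMM]
    refine le_iInf fun T => le_iInf fun hTm => le_iInf fun hTmap => ?_
    rcases eq_or_ne (disMapMM μX ⊤ T) ⊤ with h | h
    · rw [h]; exact le_top
    · set D := (disMapMM μX ⊤ T).toReal with hD
      have hD0 : 0 ≤ D := ENNReal.toReal_nonneg
      have hbound : ∀ p q : X, |dist p q - dist (T p) (T q)| ≤ D := by
        intro p q
        rw [← ENNReal.ofReal_le_iff_le_toReal h]
        have : ENNReal.ofReal |dist p q - dist (T p) (T q)| ≤
            ⨆ (x : X) (x' : X), ENNReal.ofReal |dist x x' - dist (T x) (T x')| :=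
          le_iSup₂ (f := fun x x' => ENNReal.ofReal |dist x x' - dist (T x) (T x')|) p q
        refine this.trans ?_
        rw [disMapMM, if_pos rfl]
      refine ENNReal.le_of_forall_pos_le_add fun ε hε _ => ?_
      have hkey := gmEm_le_ofReal μX μY T hTm hTmap (D / 2 + (ε : ℝ) / 2)
        (by positivity) (fun p q => by
          have h1 := hbound p q
          have h2 : (0 : ℝ) < ε := hε
          linarith)
      calc 2 * gmEm (fun x x' => dist x x') (fun y y' => dist y y') μX μY ⊤ ≤
            2 * ENNReal.ofReal (D / 2 + (ε : ℝ) / 2) := by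
              exact mul_le_mul_right hkey 2
        _ = ENNReal.ofReal (2 * (D / 2 + (ε : ℝ) / 2)) := by
              rw [ENNReal.ofReal_mul (by norm_num : (0:ℝ) ≤ 2)]
              norm_num
        _ = ENNReal.ofReal (D + (ε : ℝ)) := by ring_nf
        _ = ENNReal.ofReal D + ENNReal.ofReal (ε : ℝ) := ENNReal.ofReal_add hD0 ε.2
        _ = disMapMM μX ⊤ T + ε := by
              rw [hD, ENNReal.ofReal_toReal h, ENNReal.ofReal_coe_nnreal]
  calc gmEm (fun x x' => dist x x') (fun y y' => dist y y') μX μY ⊤ =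
        (2 : ℝ≥0∞)⁻¹ * (2 * gmEm (fun x x' => dist x x') (fun y y' => dist y y') μX μY ⊤) := by
          rw [← mul_assoc, ENNReal.inv_mul_cancel (by norm_num) (by norm_num), one_mul]
    _ ≤ (2 : ℝ≥0∞)⁻¹ * gmMM μX μY ⊤ := mul_le_mul_right h2 _

end Aux2
section Aux3

open Set Function Metric

variable {X Y : Type} [MetricSpace X] [PolishSpace X] [MeasurableSpace X] [BorelSpace X]
    [MetricSpace Y] [PolishSpace Y] [MeasurableSpace Y] [BorelSpace Y]
    (μX : Measure X) (μY : Measure Y)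

omit [PolishSpace X] in
lemma half_gmMM_le_gmEm [IsProbabilityMeasure μX] [μX.IsOpenPosMeasure]
    [IsProbabilityMeasure μY] [μY.IsOpenPosMeasure] :
    (2 : ℝ≥0∞)⁻¹ * gmMM μX μY ⊤ ≤
      gmEm (fun x x' => dist x x') (fun y y' => dist y y') μX μY ⊤ := by
  classical
  rw [gmEm]
  refine le_iInf fun Z => le_iInf fun iZ => le_iInf fun φX => le_iInf fun φY =>
    le_iInf fun hX => le_iInf fun hY => ?_
  letI mZ : MeasurableSpace Z := borel Z
  haveI : BorelSpace Z := ⟨rfl⟩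
  rw [mongeD]
  refine le_iInf fun ψ => le_iInf fun hψm => le_iInf fun hψmap => ?_
  rw [if_pos rfl]
  set μ := @Measure.map X Z _ (borel Z) φX μX with hμdef
  set S := ⨆ (z : Z) (_ : ∀ U ∈ nhds z, 0 < μ U), ENNReal.ofReal (dist z (ψ z)) with hSdef
  rcases eq_or_ne S ⊤ with htop | hne
  · rw [htop]; exact le_top
  have hIX : Isometry φX := Isometry.of_dist_eq hX
  have hIY : Isometry φY := Isometry.of_dist_eq hY
  haveI : Nonempty Y := nonempty_of_prob μY
  have hφXm : Measurable φX := hIX.continuous.measurable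
  have hposX : ∀ x : X, ∀ U ∈ nhds (φX x), 0 < μ U := by
    intro x U hU
    rcases Metric.mem_nhds_iff.1 hU with ⟨ε, hε, hball⟩
    have h1 : 0 < μX (Metric.ball x ε) :=
      Metric.isOpen_ball.measure_pos μX (Metric.nonempty_ball.2 hε)
    have h2 : μX (Metric.ball x ε) ≤ μX (φX ⁻¹' Metric.ball (φX x) ε) := by
      refine measure_mono fun a ha => ?_
      simp only [Set.mem_preimage, Metric.mem_ball] at *
      rwa [hX a x]
    have h3 : μX (φX ⁻¹' Metric.ball (φX x) ε) = μ (Metric.ball (φX x) ε) :=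
      (Measure.map_apply hφXm measurableSet_ball).symm
    calc (0 : ℝ≥0∞) < μX (Metric.ball x ε) := h1
      _ ≤ μ (Metric.ball (φX x) ε) := h3 ▸ h2
      _ ≤ μ U := measure_mono hball
  set M := S.toReal with hM
  have hM0 : 0 ≤ M := ENNReal.toReal_nonneg
  have hMx : ∀ x : X, dist (φX x) (ψ (φX x)) ≤ M := by
    intro x
    rw [← ENNReal.ofReal_le_iff_le_toReal hne]
    exact le_iSup₂ (f := fun z (_ : ∀ U ∈ nhds z, 0 < μ U) =>
      ENNReal.ofReal (dist z (ψ z))) (φX x) (hposX x)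
  have hembY : MeasurableEmbedding φY := hIY.continuous.measurableEmbedding hIY.injective
  have hrange : MeasurableSet (Set.range φY) := hembY.measurableSet_range
  have hν : (@Measure.map Y Z _ (borel Z) φY μY) (Set.range φY)ᶜ = 0 := by
    rw [Measure.map_apply hembY.measurable hrange.compl]
    simp
  have hμψ : μ (ψ ⁻¹' (Set.range φY)ᶜ) = 0 := by
    rw [← Measure.map_apply hψm hrange.compl, hψmap, hν]
  set G : Set X := φX ⁻¹' (ψ ⁻¹' (Set.range φY)) with hGdef
  have hGmeas : MeasurableSet G := hφXm (hψm hrange)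
  have hNX : μX Gᶜ = 0 := by
    have : Gᶜ = φX ⁻¹' (ψ ⁻¹' (Set.range φY)ᶜ) := by
      ext a; simp [G]
    rw [this, ← Measure.map_apply hφXm (hψm hrange.compl)]
    exact hμψ
  -- main step : for every positive δ, gmMM is at most 2(M+δ)
  have hmain : ∀ δ : ℝ, 0 < δ → gmMM μX μY ⊤ ≤ ENNReal.ofReal (2 * (M + δ)) := by
    intro δ hδ
    set u : ℕ → Y := TopologicalSpace.denseSeq Y with hu
    have hud : DenseRange u := TopologicalSpace.denseRange_denseSeq Y
    have hex : ∀ x : X, ∃ n, dist (φX x) (φY (u n)) < M + δ := by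
      intro x
      have hpos : 0 < μX (Metric.ball x (δ / 2)) :=
        Metric.isOpen_ball.measure_pos μX (Metric.nonempty_ball.2 (by positivity))
      have hpos2 : μX (Metric.ball x (δ / 2) ∩ G) ≠ 0 := by
        have hdiff : μX (Metric.ball x (δ / 2) \ Gᶜ) = μX (Metric.ball x (δ / 2)) :=
          measure_diff_null hNX
      -- ball \ Gᶜ = ball ∩ G
        rw [Set.diff_eq, compl_compl] at hdiff
        rw [hdiff]
        exact hpos.ne'
      obtain ⟨x', hx'⟩ := nonempty_of_measure_ne_zero hpos2
      obtain ⟨hx'ball, hx'G⟩ := hx'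
      obtain ⟨y', hy'⟩ := hx'G
      have hd1 : dist (φX x) (φY y') ≤ δ / 2 + M := by
        calc dist (φX x) (φY y') ≤ dist (φX x) (φX x') + dist (φX x') (φY y') :=
              dist_triangle _ _ _
          _ = dist x x' + dist (φX x') (ψ (φX x')) := by rw [hX x x', hy']
          _ ≤ δ / 2 + M := by
              have := hMx x'
              have hb : dist x x' < δ / 2 := by
                rw [Metric.mem_ball] at hx'ball; rwa [dist_comm]
              linarith
      obtain ⟨n, hn⟩ := hud.exists_dist_lt y' (by positivity : (0:ℝ) < δ / 2)
      refine ⟨n, ?_⟩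
      calc dist (φX x) (φY (u n)) ≤ dist (φX x) (φY y') + dist (φY y') (φY (u n)) :=
            dist_triangle _ _ _
        _ = dist (φX x) (φY y') + dist y' (u n) := by rw [hY y' (u n)]
        _ < (δ / 2 + M) + δ / 2 := by
            have := hd1
            linarith [hn]
        _ = M + δ := by ring
    set k : X → ℕ := fun x => Nat.find (hex x) with hk
    set T : X → Y := fun x => if x ∈ G then Function.invFun φY (ψ (φX x)) else u (k x)
      with hT
    have hTG : ∀ x ∈ G, φY (T x) = ψ (φX x) := by
      intro x hx
      have hx' : ψ (φX x) ∈ Set.range φY := hx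
      simp only [hT, if_pos hx]
      exact Function.invFun_eq hx'
    have hTdist : ∀ x, dist (φX x) (φY (T x)) ≤ M + δ := by
      intro x
      by_cases hx : x ∈ G
      · rw [hTG x hx]; exact (hMx x).trans (by linarith)
      · simp only [hT, if_neg hx]
        exact (Nat.find_spec (hex x)).le
    have hjset : ∀ j : ℕ, MeasurableSet {x : X | dist (φX x) (φY (u j)) < M + δ} := by
      intro j
      have hcont : Continuous fun x : X => dist (φX x) (φY (u j)) :=
        (hIX.continuous.dist continuous_const)
      exact (isOpen_lt hcont continuous_const).measurableSet
    have hkmeas : Measurable k := by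
      refine measurable_to_countable' fun n => ?_
      have : k ⁻¹' {n} = {x : X | dist (φX x) (φY (u n)) < M + δ} ∩
          ⋂ (m : ℕ) (_ : m < n), {x : X | dist (φX x) (φY (u m)) < M + δ}ᶜ := by
        ext x
        simp only [Set.mem_preimage, Set.mem_singleton_iff, hk, Nat.find_eq_iff (hex x),
          Set.mem_inter_iff, Set.mem_setOf_eq, Set.mem_iInter, Set.mem_compl_iff]
      rw [this]
      exact (hjset n).inter (MeasurableSet.iInter fun m =>
        MeasurableSet.iInter fun _ => (hjset m).compl)
    have humeas : Measurable fun x : X => u (k x) :=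
      (measurable_from_top (f := u)).comp hkmeas
    have hTpre : ∀ B : Set Y, T ⁻¹' B =
        (G ∩ (fun x => ψ (φX x)) ⁻¹' (φY '' B)) ∪ (Gᶜ ∩ (fun x => u (k x)) ⁻¹' B) := by
      intro B
      ext x
      by_cases hx : x ∈ G
      · simp only [Set.mem_preimage, Set.mem_union, Set.mem_inter_iff, hx, true_and,
          Set.mem_compl_iff, not_true, false_and, or_false]
        constructor
        · intro hB
          exact ⟨T x, hB, hTG x hx⟩
        · rintro ⟨y₀, hy₀B, hy₀⟩
          have : T x = y₀ := by
            have h1 : φY (T x) = φY y₀ := by rw [hTG x hx, hy₀]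
            exact hIY.injective h1
          rwa [this]
      · simp [hT, hx]
    have hTmeas : Measurable T := by
      intro B hB
      rw [hTpre B]
      exact (hGmeas.inter ((hψm.comp hφXm) (hembY.measurableSet_image' hB))).union
        (hGmeas.compl.inter (humeas hB))
    have hTmap : μX.map T = μY := by
      ext B hB
      rw [Measure.map_apply hTmeas hB]
      have hae : T ⁻¹' B =ᵐ[μX] (fun x => ψ (φX x)) ⁻¹' (φY '' B) := by
        have hGae : ∀ᵐ x ∂μX, x ∈ G := by
          rw [MeasureTheory.ae_iff]
          convert hNX using 2
          rfl
        filter_upwards [hGae] with x hx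
        have : (x ∈ T ⁻¹' B) ↔ (x ∈ (fun x => ψ (φX x)) ⁻¹' (φY '' B)) := by
          simp only [Set.mem_preimage]
          rw [← hTG x hx]
          exact (hIY.injective.mem_set_image).symm
        exact propext this
      rw [measure_congr hae]
      have hpre2 : (fun x => ψ (φX x)) ⁻¹' (φY '' B) = (ψ ∘ φX) ⁻¹' (φY '' B) := rfl
      rw [hpre2, ← Measure.map_apply (hψm.comp hφXm) (hembY.measurableSet_image' hB)]
      have hcomp : μX.map (ψ ∘ φX) = @Measure.map Y Z _ (borel Z) φY μY := by
        rw [← Measure.map_map hψm hφXm, hψmap]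
      rw [hcomp, Measure.map_apply hembY.measurable (hembY.measurableSet_image' hB),
        hIY.injective.preimage_image]
    have hgm : gmMM μX μY ⊤ ≤ disMapMM μX ⊤ T := by
      rw [gmMM]
      exact iInf_le_of_le T (iInf_le_of_le hTmeas (iInf_le _ hTmap))
    refine hgm.trans ?_
    rw [disMapMM, if_pos rfl]
    refine iSup₂_le fun x x' => ?_
    refine ENNReal.ofReal_le_ofReal ?_
    have h1 := hTdist x
    have h2 := hTdist x'
    have e1 : dist x x' = dist (φX x) (φX x') := (hX x x').symm
    have e2 : dist (T x) (T x') = dist (φY (T x)) (φY (T x')) := (hY _ _).symm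
    rw [e1, e2, abs_le]
    have t1 : dist (φX x) (φX x') ≤
        dist (φX x) (φY (T x)) + dist (φY (T x)) (φY (T x')) + dist (φY (T x')) (φX x') :=
      dist_triangle4 _ _ _ _
    have t2 : dist (φY (T x)) (φY (T x')) ≤
        dist (φY (T x)) (φX x) + dist (φX x) (φX x') + dist (φX x') (φY (T x')) :=
      dist_triangle4 _ _ _ _
    have c1 : dist (φY (T x')) (φX x') = dist (φX x') (φY (T x')) := dist_comm _ _
    have c2 : dist (φY (T x)) (φX x) = dist (φX x) (φY (T x)) := dist_comm _ _
    constructor <;> [skip; skip] <;> nlinarith [h1, h2, t1, t2, c1, c2]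
  -- conclude
  have h2S : gmMM μX μY ⊤ ≤ 2 * S := by
    refine ENNReal.le_of_forall_pos_le_add fun ε hε _ => ?_
    have hεR : (0 : ℝ) < (ε : ℝ) := hε
    calc gmMM μX μY ⊤ ≤ ENNReal.ofReal (2 * (M + (ε : ℝ) / 2)) := hmain _ (by positivity)
      _ = ENNReal.ofReal (2 * M + (ε : ℝ)) := by ring_nf
      _ = ENNReal.ofReal (2 * M) + ENNReal.ofReal (ε : ℝ) :=
          ENNReal.ofReal_add (by positivity) ε.2
      _ = 2 * ENNReal.ofReal M + (ε : ℝ≥0∞) := by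
          rw [ENNReal.ofReal_mul (by norm_num : (0:ℝ) ≤ 2), ENNReal.ofReal_coe_nnreal]
          norm_num
      _ = 2 * S + ε := by rw [hM, ENNReal.ofReal_toReal hne]
  calc (2 : ℝ≥0∞)⁻¹ * gmMM μX μY ⊤ ≤ (2 : ℝ≥0∞)⁻¹ * (2 * S) := mul_le_mul_right h2S _
    _ = S := by rw [← mul_assoc, ENNReal.inv_mul_cancel (by norm_num) (by norm_num), one_mul]

end Aux3


/-- Theorem `thm:gromov_monge_reformulation`, `p = ∞` case: for all metric
measure spaces `𝒳`, `𝒴`, `(1/2)·GM_∞(𝒳,𝒴) = GM^em_∞(𝒳,𝒴)`. -/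
theorem half_gromovMonge_infty_eq_gmEm_infty
    {X Y : Type} [MetricSpace X] [PolishSpace X] [MeasurableSpace X] [BorelSpace X]
    [MetricSpace Y] [PolishSpace Y] [MeasurableSpace Y] [BorelSpace Y]
    (μX : Measure X) [IsProbabilityMeasure μX] [μX.IsOpenPosMeasure]
    (μY : Measure Y) [IsProbabilityMeasure μY] [μY.IsOpenPosMeasure] :
    (2 : ℝ≥0∞)⁻¹ * gmMM μX μY ⊤ =
      gmEm (fun x x' => dist x x') (fun y y' => dist y y') μX μY ⊤ :=
  le_antisymm (half_gmMM_le_gmEm μX μY) (gmEm_le_half μX μY)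
end
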